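/- For integers n_k > n_{k−1} > ⋯ > n_1 ≥ 1 and m_l > m_{l−1} > ⋯ > m_1 ≥ 1 and any x_1,…,x_k, y_1,…,y_l ∈ {1,−1}: P(ξ̃_{α_{n_i}} = x_i for 1 ≤ i ≤ k, ξ̃_{β_{m_j}} = y_j for 1 ≤ j ≤ l) = (1/2)·P(ξ̃_{α_{n_i}} = x_i for 1 ≤ i ≤ k−1, ξ̃_{β_{m_j}} = y_j for 1 ≤ j ≤ l, α_{n_k} > β_{m_l}) + (1/2)·P(ξ̃_{α_{n_i}} = x_i for 1 ≤ i ≤ k, ξ̃_{β_{m_j}} = y_j for 1 ≤ j ≤ l−1, α_{n_k} < β_{m_l}). -/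

import Mathlib

open MeasureTheory ProbabilityTheory Filter Set

noncomputable section

variable {Ω : Type*}

/-- `Q n = 1` if the `n`-th moves agree, `0` if they are opposite. -/
def Qproc (ξ η : ℕ → Ω → ℝ) (n : ℕ) (ω : Ω) : ℕ :=
  if ξ n ω = η n ω then 1 else 0

/-- `T n = ∑_{k=1}^n Q k`, the number of common movements up to step `n`. -/
def Tproc (ξ η : ℕ → Ω → ℝ) (n : ℕ) (ω : Ω) : ℕ :=
  ∑ k ∈ Finset.Icc 1 n, Qproc ξ η k ω

/-- `S n = n - T n`, the number of counter movements up to step `n`. -/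
def Sproc (ξ η : ℕ → Ω → ℝ) (n : ℕ) (ω : Ω) : ℕ :=
  n - Tproc ξ η n ω

/-- `α n = inf {k ≥ 1 : T k = n}`, with `inf ∅ = ⊤`, valued in `ℕ∞`. -/
def alphaProc (ξ η : ℕ → Ω → ℝ) (n : ℕ) (ω : Ω) : ℕ∞ :=
  ⨅ (k : ℕ) (_ : 1 ≤ k ∧ Tproc ξ η k ω = n), (k : ℕ∞)

/-- `β n = inf {k ≥ 1 : S k = n}`, with `inf ∅ = ⊤`, valued in `ℕ∞`. -/
def betaProc (ξ η : ℕ → Ω → ℝ) (n : ℕ) (ω : Ω) : ℕ∞ :=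
  ⨅ (k : ℕ) (_ : 1 ≤ k ∧ Sproc ξ η k ω = n), (k : ℕ∞)

/-- `ξ̃_{α n}`: equal to `ξ_i` on `{α n = i}` (`i < ∞`) and to `ζ n` on `{α n = ∞}`. -/
def xiAlpha (ξ η ζ : ℕ → Ω → ℝ) (n : ℕ) (ω : Ω) : ℝ :=
  if alphaProc ξ η n ω = ⊤ then ζ n ω else ξ (alphaProc ξ η n ω).toNat ω

/-- `ξ̃_{β m}`: equal to `ξ_i` on `{β m = i}` (`i < ∞`) and to `ψ m` on `{β m = ∞}`. -/
def xiBeta (ξ η ψ : ℕ → Ω → ℝ) (m : ℕ) (ω : Ω) : ℝ :=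
  if betaProc ξ η m ω = ⊤ then ψ m ω else ξ (betaProc ξ η m ω).toNat ω

/-- The common-movement walk `X n = ∑_{i=1}^n ξ̃_{α i}`. -/
def Xproc (ξ η ζ : ℕ → Ω → ℝ) (n : ℕ) (ω : Ω) : ℝ :=
  ∑ i ∈ Finset.Icc 1 n, xiAlpha ξ η ζ i ω

/-- The counter-movement walk `Y n = ∑_{i=1}^n ξ̃_{β i}`. -/
def Yproc (ξ η ψ : ℕ → Ω → ℝ) (n : ℕ) (ω : Ω) : ℝ :=
  ∑ i ∈ Finset.Icc 1 n, xiBeta ξ η ψ i ω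

/-! ### Auxiliary material -/

open scoped ENNReal

section Hit

/-- Generic hitting time of a `ℕ`-valued path. -/
noncomputable def hitT (f : ℕ → ℕ) (n : ℕ) : ℕ∞ :=
  ⨅ (k : ℕ) (_ : 1 ≤ k ∧ f k = n), (k : ℕ∞)

lemma alphaProc_eq_hitT (ξ η : ℕ → Ω → ℝ) (n : ℕ) (ω : Ω) :
    alphaProc ξ η n ω = hitT (fun k => Tproc ξ η k ω) n := rfl

lemma betaProc_eq_hitT (ξ η : ℕ → Ω → ℝ) (n : ℕ) (ω : Ω) :
    betaProc ξ η n ω = hitT (fun k => Sproc ξ η k ω) n := rfl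

lemma hitT_le {f : ℕ → ℕ} {n k : ℕ} (hk : 1 ≤ k) (h : f k = n) :
    hitT f n ≤ (k : ℕ∞) := iInf₂_le k ⟨hk, h⟩

lemma le_hitT {f : ℕ → ℕ} {n j : ℕ} (h : ∀ i, 1 ≤ i → i < j → f i ≠ n) :
    (j : ℕ∞) ≤ hitT f n := by
  refine le_iInf₂ fun i hi => ?_
  rcases lt_or_ge i j with hij | hij
  · exact absurd hi.2 (h i hi.1 hij)
  · exact_mod_cast hij

lemma hitT_eq_top {f : ℕ → ℕ} {n : ℕ} (h : ∀ k, 1 ≤ k → f k ≠ n) : hitT f n = ⊤ := by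
  rw [hitT]
  simp only [iInf_eq_top]
  exact fun k hk => absurd hk.2 (h k hk.1)

lemma hitT_spec {f : ℕ → ℕ} {n : ℕ} (h : ∃ k, 1 ≤ k ∧ f k = n) :
    ∃ j : ℕ, hitT f n = (j : ℕ∞) ∧ 1 ≤ j ∧ f j = n ∧ ∀ i, 1 ≤ i → i < j → f i ≠ n := by
  classical
  refine ⟨Nat.find h, ?_, (Nat.find_spec h).1, (Nat.find_spec h).2,
    fun i h1 h2 hfi => Nat.find_min h h2 ⟨h1, hfi⟩⟩
  exact le_antisymm (hitT_le (Nat.find_spec h).1 (Nat.find_spec h).2)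
    (le_hitT fun i h1 h2 hfi => Nat.find_min h h2 ⟨h1, hfi⟩)

lemma hitT_ne_top_iff {f : ℕ → ℕ} {n : ℕ} :
    hitT f n ≠ ⊤ ↔ ∃ k, 1 ≤ k ∧ f k = n := by
  constructor
  · intro h
    by_contra hc
    push_neg at hc
    exact h (hitT_eq_top fun k hk => hc k hk)
  · intro h
    obtain ⟨j, hj, -⟩ := hitT_spec h
    simp [hj]

lemma hitT_ne_zero {f : ℕ → ℕ} {n : ℕ} : hitT f n ≠ ((0 : ℕ) : ℕ∞) := by
  intro h
  have hne : hitT f n ≠ ⊤ := by simp [h]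
  obtain ⟨j, hj, h1, -⟩ := hitT_spec (hitT_ne_top_iff.1 hne)
  rw [h] at hj
  have : (0 : ℕ) = j := by exact_mod_cast hj
  omega

lemma coe_hit_pos {f : ℕ → ℕ} {n j : ℕ} (h : hitT f n = (j : ℕ∞)) : 1 ≤ j := by
  rcases Nat.eq_zero_or_pos j with rfl | h1
  · exact absurd h hitT_ne_zero
  · exact h1

section Counting
variable {f : ℕ → ℕ} (hf0 : f 0 = 0) (hstep : ∀ k, f (k + 1) = f k ∨ f (k + 1) = f k + 1)
include hstep

lemma cnt_mono : Monotone f := by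
  apply monotone_nat_of_le_succ
  intro k
  rcases hstep k with h | h <;> omega

include hf0 in
lemma cnt_reach {n j : ℕ} (hn : 1 ≤ n) (h : n ≤ f j) :
    ∃ r, 1 ≤ r ∧ r ≤ j ∧ f r = n := by
  induction j with
  | zero => omega
  | succ j ih =>
    rcases le_or_gt n (f j) with h' | h'
    · obtain ⟨r, h1, h2, h3⟩ := ih h'
      exact ⟨r, h1, by omega, h3⟩
    · rcases hstep j with hs | hs
      · exact ⟨j + 1, by omega, le_rfl, by omega⟩
      · exact ⟨j + 1, by omega, le_rfl, by omega⟩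

include hf0 in
lemma hitT_eq_coe_iff {n j : ℕ} (hn : 1 ≤ n) (hj : 1 ≤ j) :
    hitT f n = (j : ℕ∞) ↔ f j = n ∧ f (j - 1) = n - 1 := by
  constructor
  · intro h
    have hne : hitT f n ≠ ⊤ := by simp [h]
    obtain ⟨j', hj', h1, h2, h3⟩ := hitT_spec (hitT_ne_top_iff.1 hne)
    rw [h] at hj'
    have hjj : j = j' := by exact_mod_cast hj'
    subst hjj
    refine ⟨h2, ?_⟩
    rcases Nat.eq_or_lt_of_le hj with h1' | h1'
    · have hs := hstep 0
      norm_num [hf0] at hs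
      have hj1 : j = 1 := h1'.symm
      subst hj1
      simpa [hf0] using by omega
    · have hmono := cnt_mono hstep
      have hle : f (j - 1) ≤ f j := hmono (by omega)
      have hge : f j ≤ f (j - 1) + 1 := by
        have := hstep (j - 1)
        have hj1 : j - 1 + 1 = j := by omega
        rw [hj1] at this
        omega
      have hne' : f (j - 1) ≠ n := h3 (j - 1) (by omega) (by omega)
      omega
  · rintro ⟨h1, h2⟩
    refine le_antisymm (hitT_le hj h1) (le_hitT fun i hi hij => ?_)
    have := cnt_mono hstep (show i ≤ j - 1 by omega)
    omega

end Counting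
end Hit

section Paths
variable (ξ η : ℕ → Ω → ℝ)

lemma Tproc_zero (ω : Ω) : Tproc ξ η 0 ω = 0 := by simp [Tproc]

lemma Tproc_succ (k : ℕ) (ω : Ω) :
    Tproc ξ η (k + 1) ω = Tproc ξ η k ω + Qproc ξ η (k + 1) ω := by
  rw [Tproc, Tproc, Finset.sum_Icc_succ_top (by omega : 1 ≤ k + 1)]

lemma Qproc_le_one (k : ℕ) (ω : Ω) : Qproc ξ η k ω ≤ 1 := by
  rw [Qproc]; split <;> omega

lemma Tproc_step (ω : Ω) (k : ℕ) :
    Tproc ξ η (k+1) ω = Tproc ξ η k ω ∨ Tproc ξ η (k+1) ω = Tproc ξ η k ω + 1 := by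
  rw [Tproc_succ]
  have := Qproc_le_one ξ η (k+1) ω
  omega

lemma Tproc_le (n : ℕ) (ω : Ω) : Tproc ξ η n ω ≤ n := by
  induction n with
  | zero => simp [Tproc_zero]
  | succ n ih =>
    have := Tproc_step ξ η ω n
    omega

lemma Sproc_zero (ω : Ω) : Sproc ξ η 0 ω = 0 := by simp [Sproc, Tproc_zero]

lemma Sproc_add_Tproc (n : ℕ) (ω : Ω) : Sproc ξ η n ω + Tproc ξ η n ω = n := by
  have := Tproc_le ξ η n ω
  rw [Sproc]; omega

lemma Sproc_step (ω : Ω) (k : ℕ) :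
    Sproc ξ η (k+1) ω = Sproc ξ η k ω ∨ Sproc ξ η (k+1) ω = Sproc ξ η k ω + 1 := by
  have h1 := Sproc_add_Tproc ξ η k ω
  have h2 := Sproc_add_Tproc ξ η (k+1) ω
  have := Tproc_step ξ η ω k
  omega

lemma alpha_eq_coe_iff {n j : ℕ} (hn : 1 ≤ n) (hj : 1 ≤ j) (ω : Ω) :
    alphaProc ξ η n ω = (j : ℕ∞) ↔ Tproc ξ η j ω = n ∧ Tproc ξ η (j - 1) ω = n - 1 := by
  rw [alphaProc_eq_hitT]
  exact hitT_eq_coe_iff (f := fun r => Tproc ξ η r ω) (Tproc_zero ξ η ω)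
    (fun r => Tproc_step ξ η ω r) hn hj

lemma beta_eq_coe_iff {n j : ℕ} (hn : 1 ≤ n) (hj : 1 ≤ j) (ω : Ω) :
    betaProc ξ η n ω = (j : ℕ∞) ↔ Sproc ξ η j ω = n ∧ Sproc ξ η (j - 1) ω = n - 1 := by
  rw [betaProc_eq_hitT]
  exact hitT_eq_coe_iff (f := fun r => Sproc ξ η r ω) (Sproc_zero ξ η ω)
    (fun r => Sproc_step ξ η ω r) hn hj

lemma alpha_coe_pos {n j : ℕ} {ω : Ω} (h : alphaProc ξ η n ω = (j : ℕ∞)) : 1 ≤ j :=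
  coe_hit_pos (by rw [← alphaProc_eq_hitT]; exact h)

lemma beta_coe_pos {n j : ℕ} {ω : Ω} (h : betaProc ξ η n ω = (j : ℕ∞)) : 1 ≤ j :=
  coe_hit_pos (by rw [← betaProc_eq_hitT]; exact h)

lemma xiAlpha_of_coe {ζ : ℕ → Ω → ℝ} {n r : ℕ} {ω : Ω}
    (h : alphaProc ξ η n ω = (r : ℕ∞)) : xiAlpha ξ η ζ n ω = ξ r ω := by
  rw [xiAlpha, h]
  simp

lemma xiBeta_of_coe {ψ : ℕ → Ω → ℝ} {n r : ℕ} {ω : Ω}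
    (h : betaProc ξ η n ω = (r : ℕ∞)) : xiBeta ξ η ψ n ω = ξ r ω := by
  rw [xiBeta, h]
  simp

lemma xiAlpha_of_top {ζ : ℕ → Ω → ℝ} {n : ℕ} {ω : Ω}
    (h : alphaProc ξ η n ω = ⊤) : xiAlpha ξ η ζ n ω = ζ n ω := by
  rw [xiAlpha, h]
  simp

lemma xiBeta_of_top {ψ : ℕ → Ω → ℝ} {n : ℕ} {ω : Ω}
    (h : betaProc ξ η n ω = ⊤) : xiBeta ξ η ψ n ω = ψ n ω := by
  rw [xiBeta, h]
  simp

/-- `α` and `β` are never equal (at levels `≥ 1`). -/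
lemma alpha_ne_beta {n m : ℕ} (hn : 1 ≤ n) (hm : 1 ≤ m) (ω : Ω) :
    alphaProc ξ η n ω ≠ betaProc ξ η m ω := by
  intro h
  cases hab : alphaProc ξ η n ω with
  | top =>
    rw [hab] at h
    have hT : ∀ k, 1 ≤ k → Tproc ξ η k ω ≠ n := by
      rw [alphaProc_eq_hitT] at hab
      by_contra hc
      push_neg at hc
      exact (hitT_ne_top_iff.2 hc) hab
    have hS : ∀ k, 1 ≤ k → Sproc ξ η k ω ≠ m := by
      rw [betaProc_eq_hitT] at h
      by_contra hc
      push_neg at hc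
      exact (hitT_ne_top_iff.2 hc) h.symm
    have hTb : ∀ k, Tproc ξ η k ω ≤ n - 1 := by
      intro r
      by_contra hc
      push_neg at hc
      obtain ⟨r', h1, -, h3⟩ := cnt_reach (f := fun s => Tproc ξ η s ω) (Tproc_zero ξ η ω)
        (fun s => Tproc_step ξ η ω s) hn (show n ≤ Tproc ξ η r ω by omega)
      exact hT r' h1 h3
    have hSb : ∀ k, Sproc ξ η k ω ≤ m - 1 := by
      intro r
      by_contra hc
      push_neg at hc
      obtain ⟨r', h1, -, h3⟩ := cnt_reach (f := fun s => Sproc ξ η s ω) (Sproc_zero ξ η ω)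
        (fun s => Sproc_step ξ η ω s) hm (show m ≤ Sproc ξ η r ω by omega)
      exact hS r' h1 h3
    have h1 := Sproc_add_Tproc ξ η (n + m) ω
    have h2 := hTb (n + m)
    have h3 := hSb (n + m)
    omega
  | coe j =>
    rw [hab] at h
    have hj : 1 ≤ j := alpha_coe_pos ξ η hab
    obtain ⟨hT1, hT2⟩ := (alpha_eq_coe_iff ξ η hn hj ω).1 hab
    obtain ⟨hS1, hS2⟩ := (beta_eq_coe_iff ξ η hm hj ω).1 h.symm
    have e1 := Sproc_add_Tproc ξ η j ω
    have e2 := Sproc_add_Tproc ξ η (j - 1) ω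
    omega

end Paths

section SwapLemmas
variable (ξ η : ℕ → Ω → ℝ) (hξv : ∀ n ω, ξ n ω = 1 ∨ ξ n ω = -1)
  (hηv : ∀ n ω, η n ω = 1 ∨ η n ω = -1)
include hξv hηv

lemma Tproc_swap : ∀ (n : ℕ) (ω : Ω),
    Tproc ξ (fun n ω => -η n ω) n ω = Sproc ξ η n ω := by
  intro n ω
  induction n with
  | zero => rw [Tproc_zero, Sproc_zero]
  | succ n ih =>
    have hq : Qproc ξ (fun n ω => -η n ω) (n+1) ω = 1 - Qproc ξ η (n+1) ω := by
      rw [Qproc, Qproc]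
      rcases hξv (n+1) ω with h1 | h1 <;> rcases hηv (n+1) ω with h2 | h2 <;>
        simp [h1, h2] <;> norm_num
    have h1 := Sproc_add_Tproc ξ η n ω
    have h2 := Sproc_add_Tproc ξ η (n+1) ω
    have h3 := Tproc_step ξ η ω n
    have h4 := Tproc_succ ξ (fun n ω => -η n ω) n ω
    have h5 := Tproc_succ ξ η n ω
    have h6 := Qproc_le_one ξ η (n+1) ω
    omega

lemma Sproc_swap : ∀ (n : ℕ) (ω : Ω),
    Sproc ξ (fun n ω => -η n ω) n ω = Tproc ξ η n ω := by
  intro n ω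
  have h1 := Sproc_add_Tproc ξ (fun n ω => -η n ω) n ω
  have h2 := Sproc_add_Tproc ξ η n ω
  have h3 := Tproc_swap ξ η hξv hηv n ω
  omega

lemma alpha_swap : ∀ (n : ℕ) (ω : Ω),
    alphaProc ξ (fun n ω => -η n ω) n ω = betaProc ξ η n ω := by
  intro n ω
  rw [alphaProc, betaProc]
  exact iInf_congr fun k => by rw [Tproc_swap ξ η hξv hηv k ω]

lemma beta_swap : ∀ (n : ℕ) (ω : Ω),
    betaProc ξ (fun n ω => -η n ω) n ω = alphaProc ξ η n ω := by
  intro n ω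
  rw [alphaProc, betaProc]
  exact iInf_congr fun k => by rw [Sproc_swap ξ η hξv hηv k ω]

lemma xiAlpha_swap (ψ : ℕ → Ω → ℝ) : ∀ (n : ℕ) (ω : Ω),
    xiAlpha ξ (fun n ω => -η n ω) ψ n ω = xiBeta ξ η ψ n ω := by
  intro n ω
  rw [xiAlpha, xiBeta, alpha_swap ξ η hξv hηv n ω]

lemma xiBeta_swap (ζ : ℕ → Ω → ℝ) : ∀ (n : ℕ) (ω : Ω),
    xiBeta ξ (fun n ω => -η n ω) ζ n ω = xiAlpha ξ η ζ n ω := by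
  intro n ω
  rw [xiAlpha, xiBeta, beta_swap ξ η hξv hηv n ω]

end SwapLemmas

lemma iIndep_reindex {Ω ι ι' : Type*} [MeasurableSpace Ω] {μ : Measure Ω}
    [IsProbabilityMeasure μ]
    (e : ι' ≃ ι) {m : ι → MeasurableSpace Ω} (h : iIndep m μ) :
    iIndep (fun i => m (e i)) μ := by
  rw [iIndep_iff] at h ⊢
  intro s f hf
  have key := h (s.map e.toEmbedding) (f := fun i => f (e.symm i))
    (by
      intro i hi
      simp only [Finset.mem_map, Equiv.coe_toEmbedding] at hi
      obtain ⟨j, hj, rfl⟩ := hi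
      simpa using hf j hj)
  have h1 : (⋂ i ∈ s.map e.toEmbedding, f (e.symm i)) = ⋂ i ∈ s, f i := by
    ext ω
    simp only [mem_iInter, Finset.mem_map, Equiv.coe_toEmbedding]
    constructor
    · intro hh j hj
      simpa using hh (e j) ⟨j, hj, rfl⟩
    · rintro hh i ⟨j, hj, rfl⟩
      simpa using hh j hj
  have h2 : ∏ i ∈ s.map e.toEmbedding, μ (f (e.symm i)) = ∏ i ∈ s, μ (f i) := by
    rw [Finset.prod_map]
    simp
  rw [h1, h2] at key
  exact key

section MeasLemmas
variable {mΩ : MeasurableSpace Ω} (F : MeasureTheory.Filtration ℕ mΩ)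
  (ξ η : ℕ → Ω → ℝ)
  (hξm : ∀ n, 1 ≤ n → Measurable[F n] (ξ n))
  (hηm : ∀ n, 1 ≤ n → Measurable[F n] (η n))
include hξm hηm

lemma measQset {r : ℕ} (hr : 1 ≤ r) :
    MeasurableSet[F r] {ω | ξ r ω = η r ω} :=
  measurableSet_eq_fun (hξm r hr) (hηm r hr)

lemma measTfun (r : ℕ) : Measurable[F r] (fun ω => Tproc ξ η r ω) := by
  have : ∀ i ∈ Finset.Icc 1 r, Measurable[F r] (fun ω => Qproc ξ η i ω) := by
    intro i hi
    simp only [Finset.mem_Icc] at hi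
    have h1 : MeasurableSet[F i] {ω | ξ i ω = η i ω} := measQset F ξ η hξm hηm hi.1
    have h2 : MeasurableSet[F r] {ω | ξ i ω = η i ω} := F.mono hi.2 _ h1
    exact Measurable.ite h2 measurable_const measurable_const
  exact Finset.measurable_sum _ this

lemma measSfun (r : ℕ) : Measurable[F r] (fun ω => Sproc ξ η r ω) :=
  (measurable_from_top (f := fun t : ℕ => r - t)).comp (measTfun F ξ η hξm hηm r)

lemma measAlphaEqF {n r : ℕ} (hn : 1 ≤ n) (hr : 1 ≤ r) :
    MeasurableSet[F r] {ω | alphaProc ξ η n ω = (r : ℕ∞)} := by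
  have : {ω | alphaProc ξ η n ω = (r : ℕ∞)}
      = {ω | Tproc ξ η r ω = n} ∩ {ω | Tproc ξ η (r - 1) ω = n - 1} := by
    ext ω
    simpa [mem_inter_iff] using alpha_eq_coe_iff ξ η hn hr ω
  rw [this]
  exact ((measTfun F ξ η hξm hηm r) (measurableSet_singleton n)).inter
    (F.mono (by omega) _ ((measTfun F ξ η hξm hηm (r - 1)) (measurableSet_singleton (n - 1))))

lemma measBetaEqF {n r : ℕ} (hn : 1 ≤ n) (hr : 1 ≤ r) :
    MeasurableSet[F r] {ω | betaProc ξ η n ω = (r : ℕ∞)} := by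
  have : {ω | betaProc ξ η n ω = (r : ℕ∞)}
      = {ω | Sproc ξ η r ω = n} ∩ {ω | Sproc ξ η (r - 1) ω = n - 1} := by
    ext ω
    simpa [mem_inter_iff] using beta_eq_coe_iff ξ η hn hr ω
  rw [this]
  exact ((measSfun F ξ η hξm hηm r) (measurableSet_singleton n)).inter
    (F.mono (by omega) _ ((measSfun F ξ η hξm hηm (r - 1)) (measurableSet_singleton (n - 1))))

lemma measAlphaEqM (m' : MeasurableSpace Ω) (hFle : ∀ r, (F r : MeasurableSpace Ω) ≤ m')
    {n : ℕ} (hn : 1 ≤ n) (r : ℕ) :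
    MeasurableSet[m'] {ω | alphaProc ξ η n ω = (r : ℕ∞)} := by
  rcases Nat.eq_zero_or_pos r with hr | hr
  · subst hr
    have : {ω | alphaProc ξ η n ω = ((0:ℕ) : ℕ∞)} = (∅ : Set Ω) := by
      ext ω
      simp only [mem_setOf_eq, mem_empty_iff_false, iff_false]
      rw [alphaProc_eq_hitT]
      exact hitT_ne_zero
    rw [this]; exact MeasurableSet.empty
  · exact hFle r _ (measAlphaEqF F ξ η hξm hηm hn hr)

lemma measBetaEqM (m' : MeasurableSpace Ω) (hFle : ∀ r, (F r : MeasurableSpace Ω) ≤ m')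
    {n : ℕ} (hn : 1 ≤ n) (r : ℕ) :
    MeasurableSet[m'] {ω | betaProc ξ η n ω = (r : ℕ∞)} := by
  rcases Nat.eq_zero_or_pos r with hr | hr
  · subst hr
    have : {ω | betaProc ξ η n ω = ((0:ℕ) : ℕ∞)} = (∅ : Set Ω) := by
      ext ω
      simp only [mem_setOf_eq, mem_empty_iff_false, iff_false]
      rw [betaProc_eq_hitT]
      exact hitT_ne_zero
    rw [this]; exact MeasurableSet.empty
  · exact hFle r _ (measBetaEqF F ξ η hξm hηm hn hr)

lemma measAlphaTopM (m' : MeasurableSpace Ω) (hFle : ∀ r, (F r : MeasurableSpace Ω) ≤ m')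
    {n : ℕ} (hn : 1 ≤ n) :
    MeasurableSet[m'] {ω | alphaProc ξ η n ω = ⊤} := by
  have : {ω | alphaProc ξ η n ω = ⊤} = (⋃ r : ℕ, {ω | alphaProc ξ η n ω = (r : ℕ∞)})ᶜ := by
    ext ω
    simp only [mem_compl_iff, mem_iUnion, mem_setOf_eq, not_exists]
    cases h : alphaProc ξ η n ω with
    | top => simp
    | coe j =>
      constructor
      · intro hh; exact absurd hh (ENat.coe_ne_top j)
      · intro hh; exact absurd rfl (hh j)
  rw [this]
  exact (MeasurableSet.iUnion fun r => measAlphaEqM F ξ η hξm hηm m' hFle hn r).compl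

lemma measBetaTopM (m' : MeasurableSpace Ω) (hFle : ∀ r, (F r : MeasurableSpace Ω) ≤ m')
    {n : ℕ} (hn : 1 ≤ n) :
    MeasurableSet[m'] {ω | betaProc ξ η n ω = ⊤} := by
  have : {ω | betaProc ξ η n ω = ⊤} = (⋃ r : ℕ, {ω | betaProc ξ η n ω = (r : ℕ∞)})ᶜ := by
    ext ω
    simp only [mem_compl_iff, mem_iUnion, mem_setOf_eq, not_exists]
    cases h : betaProc ξ η n ω with
    | top => simp
    | coe j =>
      constructor
      · intro hh; exact absurd hh (ENat.coe_ne_top j)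
      · intro hh; exact absurd rfl (hh j)
  rw [this]
  exact (MeasurableSet.iUnion fun r => measBetaEqM F ξ η hξm hηm m' hFle hn r).compl

lemma measBetaLtM (m' : MeasurableSpace Ω) (hFle : ∀ r, (F r : MeasurableSpace Ω) ≤ m')
    {n : ℕ} (hn : 1 ≤ n) (j : ℕ) :
    MeasurableSet[m'] {ω | betaProc ξ η n ω < (j : ℕ∞)} := by
  have : {ω | betaProc ξ η n ω < (j : ℕ∞)}
      = ⋃ r : ℕ, ⋃ (_ : r < j), {ω | betaProc ξ η n ω = (r : ℕ∞)} := by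
    ext ω
    simp only [mem_iUnion, mem_setOf_eq]
    cases h : betaProc ξ η n ω with
    | top => simp
    | coe b =>
      constructor
      · intro hh
        exact ⟨b, by exact_mod_cast hh, rfl⟩
      · rintro ⟨r, hr, he⟩
        have : b = r := by exact_mod_cast he
        subst this
        exact_mod_cast hr
  rw [this]
  exact MeasurableSet.iUnion fun r => MeasurableSet.iUnion fun _ =>
    measBetaEqM F ξ η hξm hηm m' hFle hn r

lemma measBetaLtF {n j : ℕ} (hn : 1 ≤ n) (hj : 1 ≤ j) :
    MeasurableSet[F (j - 1)] {ω | betaProc ξ η n ω < (j : ℕ∞)} := by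
  have : {ω | betaProc ξ η n ω < (j : ℕ∞)}
      = ⋃ r : ℕ, ⋃ (_ : 1 ≤ r ∧ r < j), {ω | betaProc ξ η n ω = (r : ℕ∞)} := by
    ext ω
    simp only [mem_iUnion, mem_setOf_eq]
    cases h : betaProc ξ η n ω with
    | top => simp
    | coe b =>
      constructor
      · intro hh
        exact ⟨b, ⟨beta_coe_pos ξ η h, by exact_mod_cast hh⟩, rfl⟩
      · rintro ⟨r, hr, he⟩
        have : b = r := by exact_mod_cast he
        subst this
        exact_mod_cast hr.2
  rw [this]
  refine MeasurableSet.iUnion fun r => MeasurableSet.iUnion fun hr => ?_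
  exact F.mono (by omega) _ (measBetaEqF F ξ η hξm hηm hn hr.1)

lemma measXiAlphaEqM (m' : MeasurableSpace Ω) (hFle : ∀ r, (F r : MeasurableSpace Ω) ≤ m')
    (ζ : ℕ → Ω → ℝ) {n : ℕ}
    (hζn : MeasurableSpace.comap (ζ n) inferInstance ≤ m') (hn : 1 ≤ n) (c : ℝ) :
    MeasurableSet[m'] {ω | xiAlpha ξ η ζ n ω = c} := by
  have : {ω | xiAlpha ξ η ζ n ω = c}
      = ({ω | alphaProc ξ η n ω = ⊤} ∩ {ω | ζ n ω = c})
        ∪ ⋃ r : ℕ, ({ω | alphaProc ξ η n ω = ((r + 1 : ℕ) : ℕ∞)} ∩ {ω | ξ (r + 1) ω = c}) := by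
    ext ω
    simp only [mem_union, mem_iUnion, mem_inter_iff, mem_setOf_eq]
    constructor
    · intro hc
      cases h : alphaProc ξ η n ω with
      | top =>
        rw [xiAlpha_of_top ξ η h] at hc
        exact Or.inl ⟨rfl, hc⟩
      | coe j =>
        have hj : 1 ≤ j := alpha_coe_pos ξ η h
        rw [xiAlpha_of_coe ξ η h] at hc
        refine Or.inr ⟨j - 1, ?_, ?_⟩
        · rw [show j - 1 + 1 = j by omega]
        · rw [show j - 1 + 1 = j by omega]; exact hc
    · rintro (⟨htop, hc⟩ | ⟨r, hr, hc⟩)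
      · rw [xiAlpha_of_top ξ η htop]; exact hc
      · rw [xiAlpha_of_coe ξ η hr]; exact hc
  rw [this]
  refine MeasurableSet.union ((measAlphaTopM F ξ η hξm hηm m' hFle hn).inter
    (hζn _ ⟨{c}, measurableSet_singleton c, rfl⟩)) (MeasurableSet.iUnion fun r => ?_)
  exact (measAlphaEqM F ξ η hξm hηm m' hFle hn (r + 1)).inter
    (hFle (r + 1) _ ((hξm (r + 1) (by omega)) (measurableSet_singleton c)))

lemma measXiBetaEqM (m' : MeasurableSpace Ω) (hFle : ∀ r, (F r : MeasurableSpace Ω) ≤ m')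
    (ψ : ℕ → Ω → ℝ) {n : ℕ}
    (hψn : MeasurableSpace.comap (ψ n) inferInstance ≤ m') (hn : 1 ≤ n) (c : ℝ) :
    MeasurableSet[m'] {ω | xiBeta ξ η ψ n ω = c} := by
  have : {ω | xiBeta ξ η ψ n ω = c}
      = ({ω | betaProc ξ η n ω = ⊤} ∩ {ω | ψ n ω = c})
        ∪ ⋃ r : ℕ, ({ω | betaProc ξ η n ω = ((r + 1 : ℕ) : ℕ∞)} ∩ {ω | ξ (r + 1) ω = c}) := by
    ext ω
    simp only [mem_union, mem_iUnion, mem_inter_iff, mem_setOf_eq]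
    constructor
    · intro hc
      cases h : betaProc ξ η n ω with
      | top =>
        rw [xiBeta_of_top ξ η h] at hc
        exact Or.inl ⟨rfl, hc⟩
      | coe j =>
        have hj : 1 ≤ j := beta_coe_pos ξ η h
        rw [xiBeta_of_coe ξ η h] at hc
        refine Or.inr ⟨j - 1, ?_, ?_⟩
        · rw [show j - 1 + 1 = j by omega]
        · rw [show j - 1 + 1 = j by omega]; exact hc
    · rintro (⟨htop, hc⟩ | ⟨r, hr, hc⟩)
      · rw [xiBeta_of_top ξ η htop]; exact hc
      · rw [xiBeta_of_coe ξ η hr]; exact hc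
  rw [this]
  refine MeasurableSet.union ((measBetaTopM F ξ η hξm hηm m' hFle hn).inter
    (hψn _ ⟨{c}, measurableSet_singleton c, rfl⟩)) (MeasurableSet.iUnion fun r => ?_)
  exact (measBetaEqM F ξ η hξm hηm m' hFle hn (r + 1)).inter
    (hFle (r + 1) _ ((hξm (r + 1) (by omega)) (measurableSet_singleton c)))

end MeasLemmas

lemma klemma {Ω : Type*} [mΩ : MeasurableSpace Ω] (P : Measure Ω) [IsProbabilityMeasure P]
    (F : MeasureTheory.Filtration ℕ mΩ)
    (ξ η : ℕ → Ω → ℝ)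
    (hξm : ∀ n, 1 ≤ n → Measurable[F n] (ξ n))
    (hηm : ∀ n, 1 ≤ n → Measurable[F n] (η n))
    (hξv : ∀ n ω, ξ n ω = 1 ∨ ξ n ω = -1)
    (hηv : ∀ n ω, η n ω = 1 ∨ η n ω = -1)
    (hhalf : ∀ n, 1 ≤ n →
      (P[({ω | ξ n ω = 1}).indicator (fun _ => (1 : ℝ)) | F (n - 1)] =ᵐ[P] fun _ => 1 / 2) ∧
      (P[({ω | ξ n ω = -1}).indicator (fun _ => (1 : ℝ)) | F (n - 1)] =ᵐ[P] fun _ => 1 / 2) ∧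
      (P[({ω | η n ω = 1}).indicator (fun _ => (1 : ℝ)) | F (n - 1)] =ᵐ[P] fun _ => 1 / 2) ∧
      (P[({ω | η n ω = -1}).indicator (fun _ => (1 : ℝ)) | F (n - 1)] =ᵐ[P] fun _ => 1 / 2))
    {j : ℕ} (hj : 1 ≤ j) {G : Set Ω} (hG : MeasurableSet[F (j - 1)] G)
    {c : ℝ} (hc : c = 1 ∨ c = -1) :
    P (G ∩ {ω | ξ j ω = η j ω} ∩ {ω | ξ j ω = c})
      = 2⁻¹ * P (G ∩ {ω | ξ j ω = η j ω}) := by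
  classical
  have hGm : MeasurableSet G := F.le (j - 1) G hG
  have hXm' : MeasurableSet {ω | ξ j ω = -1} := F.le j _ ((hξm j hj) (measurableSet_singleton (-1)))
  have hX1' : MeasurableSet {ω | ξ j ω = 1} := F.le j _ ((hξm j hj) (measurableSet_singleton 1))
  have hY1' : MeasurableSet {ω | η j ω = 1} := F.le j _ ((hηm j hj) (measurableSet_singleton 1))
  have hYm' : MeasurableSet {ω | η j ω = -1} := F.le j _ ((hηm j hj) (measurableSet_singleton (-1)))
  -- set-integral identities
  have key : ∀ (S : Set Ω), MeasurableSet S →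
      (P[S.indicator (fun _ => (1 : ℝ)) | F (j - 1)] =ᵐ[P] fun _ => 1 / 2) →
      (P (G ∩ S)).toReal = 2⁻¹ * (P G).toReal := by
    intro S hS hce
    have hint : Integrable (S.indicator (fun _ => (1 : ℝ))) P :=
      (integrable_indicator_iff hS).2 (integrableOn_const (measure_ne_top P S))
    have h1 : ∫ ω in G, (P[S.indicator (fun _ => (1 : ℝ)) | F (j - 1)]) ω ∂P
        = ∫ ω in G, S.indicator (fun _ => (1 : ℝ)) ω ∂P :=
      setIntegral_condExp (F.le (j - 1)) hint hG
    have h2 : ∫ ω in G, (P[S.indicator (fun _ => (1 : ℝ)) | F (j - 1)]) ω ∂P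
        = ∫ _ω in G, (1/2 : ℝ) ∂P := integral_congr_ae (ae_restrict_of_ae hce)
    have h3 : ∫ _ω in G, (1/2 : ℝ) ∂P = (P G).toReal * (1/2) := by
      rw [setIntegral_const]; simp [smul_eq_mul, measureReal_def]
    have h4 : ∫ ω in G, S.indicator (fun _ => (1 : ℝ)) ω ∂P = (P (G ∩ S)).toReal := by
      rw [setIntegral_indicator hS, setIntegral_const]
      simp [smul_eq_mul, measureReal_def]
    rw [h4] at h1
    rw [h2, h3] at h1
    linarith
  obtain ⟨hhX1, hhXm, hhY1, hhYm⟩ := hhalf j hj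
  have eX1 := key _ hX1' hhX1
  have eXm := key _ hXm' hhXm
  have eY1 := key _ hY1' hhY1
  have eYm := key _ hYm' hhYm
  -- splitting lemma
  have split : ∀ (U : Set Ω), MeasurableSet U →
      (P U).toReal = (P (U ∩ {ω | η j ω = 1})).toReal + (P (U ∩ {ω | η j ω = -1})).toReal := by
    intro U hU
    have hdisj : Disjoint (U ∩ {ω | η j ω = 1}) (U ∩ {ω | η j ω = -1}) := by
      refine Set.disjoint_left.2 ?_
      rintro ω ⟨-, h1⟩ ⟨-, h2⟩
      simp only [mem_setOf_eq] at h1 h2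
      rw [h1] at h2; norm_num at h2
    have hcover : U = (U ∩ {ω | η j ω = 1}) ∪ (U ∩ {ω | η j ω = -1}) := by
      ext ω
      simp only [mem_union, mem_inter_iff, mem_setOf_eq]
      rcases hηv j ω with h | h <;> tauto
    rw [← ENNReal.toReal_add (measure_ne_top _ _) (measure_ne_top _ _), ← measure_union hdisj
      (hU.inter hYm')]
    conv_lhs => rw [hcover]
  have splitξ : ∀ (U : Set Ω), MeasurableSet U →
      (P U).toReal = (P (U ∩ {ω | ξ j ω = 1})).toReal + (P (U ∩ {ω | ξ j ω = -1})).toReal := by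
    intro U hU
    have hdisj : Disjoint (U ∩ {ω | ξ j ω = 1}) (U ∩ {ω | ξ j ω = -1}) := by
      refine Set.disjoint_left.2 ?_
      rintro ω ⟨-, h1⟩ ⟨-, h2⟩
      simp only [mem_setOf_eq] at h1 h2
      rw [h1] at h2; norm_num at h2
    have hcover : U = (U ∩ {ω | ξ j ω = 1}) ∪ (U ∩ {ω | ξ j ω = -1}) := by
      ext ω
      simp only [mem_union, mem_inter_iff, mem_setOf_eq]
      rcases hξv j ω with h | h <;> tauto
    rw [← ENNReal.toReal_add (measure_ne_top _ _) (measure_ne_top _ _), ← measure_union hdisj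
      (hU.inter hXm')]
    conv_lhs => rw [hcover]
  set a := (P (G ∩ {ω | ξ j ω = 1} ∩ {ω | η j ω = 1})).toReal with ha
  set b := (P (G ∩ {ω | ξ j ω = 1} ∩ {ω | η j ω = -1})).toReal with hb
  set d := (P (G ∩ {ω | ξ j ω = -1} ∩ {ω | η j ω = -1})).toReal with hd
  have e1 : (P (G ∩ {ω | ξ j ω = 1})).toReal = a + b := split _ (hGm.inter hX1')
  have e2 : (P (G ∩ {ω | η j ω = -1})).toReal = b + d := by
    have hs1 : G ∩ {ω | η j ω = -1} ∩ {ω | ξ j ω = 1} = G ∩ {ω | ξ j ω = 1} ∩ {ω | η j ω = -1} := by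
      ext ω; simp only [mem_inter_iff, mem_setOf_eq]; tauto
    have hs2 : G ∩ {ω | η j ω = -1} ∩ {ω | ξ j ω = -1} = G ∩ {ω | ξ j ω = -1} ∩ {ω | η j ω = -1} := by
      ext ω; simp only [mem_inter_iff, mem_setOf_eq]; tauto
    rw [splitξ (G ∩ {ω | η j ω = -1}) (hGm.inter hYm'), hs1, hs2]
  have had : a = d := by
    rw [eX1] at e1
    rw [eYm] at e2
    linarith
  -- decompose the agreement event
  have hQsplit : G ∩ {ω | ξ j ω = η j ω}
      = (G ∩ {ω | ξ j ω = 1} ∩ {ω | η j ω = 1}) ∪ (G ∩ {ω | ξ j ω = -1} ∩ {ω | η j ω = -1}) := by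
    ext ω
    simp only [mem_union, mem_inter_iff, mem_setOf_eq]
    constructor
    · rintro ⟨hg, he⟩
      rcases hξv j ω with h | h
      · exact Or.inl ⟨⟨hg, h⟩, by rw [← he, h]⟩
      · exact Or.inr ⟨⟨hg, h⟩, by rw [← he, h]⟩
    · rintro (⟨⟨hg, h1⟩, h2⟩ | ⟨⟨hg, h1⟩, h2⟩) <;> exact ⟨hg, by rw [h1, h2]⟩
  have hQdisj : Disjoint (G ∩ {ω | ξ j ω = 1} ∩ {ω | η j ω = 1})
      (G ∩ {ω | ξ j ω = -1} ∩ {ω | η j ω = -1}) := by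
    refine Set.disjoint_left.2 ?_
    rintro ω ⟨⟨-, h1⟩, -⟩ ⟨⟨-, h2⟩, -⟩
    simp only [mem_setOf_eq] at h1 h2
    rw [h1] at h2; norm_num at h2
  have hQval : (P (G ∩ {ω | ξ j ω = η j ω})).toReal = a + d := by
    rw [hQsplit, measure_union hQdisj ((hGm.inter hXm').inter hYm'),
      ENNReal.toReal_add (measure_ne_top _ _) (measure_ne_top _ _)]
  -- identify the target set
  have htarget : (P (G ∩ {ω | ξ j ω = η j ω} ∩ {ω | ξ j ω = c})).toReal
      = if c = 1 then a else d := by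
    rcases hc with hc | hc <;> subst hc
    · simp only [if_pos rfl]
      rw [ha]; congr 2
      ext ω
      simp only [mem_inter_iff, mem_setOf_eq]
      constructor
      · rintro ⟨⟨hg, he⟩, h1⟩; exact ⟨⟨hg, h1⟩, by rw [← he, h1]⟩
      · rintro ⟨⟨hg, h1⟩, h2⟩; exact ⟨⟨hg, by rw [h1, h2]⟩, h1⟩
    · rw [if_neg (by norm_num)]
      rw [hd]; congr 2
      ext ω
      simp only [mem_inter_iff, mem_setOf_eq]
      constructor
      · rintro ⟨⟨hg, he⟩, h1⟩; exact ⟨⟨hg, h1⟩, by rw [← he, h1]⟩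
      · rintro ⟨⟨hg, h1⟩, h2⟩; exact ⟨⟨hg, by rw [h1, h2]⟩, h1⟩
  -- conclude in ℝ≥0∞
  have hfin1 : P (G ∩ {ω | ξ j ω = η j ω} ∩ {ω | ξ j ω = c}) ≠ ⊤ := measure_ne_top _ _
  have hfin2 : (2⁻¹ : ℝ≥0∞) * P (G ∩ {ω | ξ j ω = η j ω}) ≠ ⊤ :=
    ENNReal.mul_ne_top (by norm_num) (measure_ne_top _ _)
  rw [← ENNReal.toReal_eq_toReal_iff' hfin1 hfin2]
  rw [ENNReal.toReal_mul, htarget, hQval]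
  have h2r : (2⁻¹ : ℝ≥0∞).toReal = 2⁻¹ := by norm_num
  rw [h2r]
  split <;> linarith

lemma oneSide
    {Ω : Type*} [mΩ : MeasurableSpace Ω] (P : Measure Ω) [IsProbabilityMeasure P]
    (F : MeasureTheory.Filtration ℕ mΩ)
    (ξ η : ℕ → Ω → ℝ)
    (hξm : ∀ n, 1 ≤ n → Measurable[F n] (ξ n))
    (hηm : ∀ n, 1 ≤ n → Measurable[F n] (η n))
    (hξv : ∀ n ω, ξ n ω = 1 ∨ ξ n ω = -1)
    (hηv : ∀ n ω, η n ω = 1 ∨ η n ω = -1)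
    (hhalf : ∀ n, 1 ≤ n →
      (P[({ω | ξ n ω = 1}).indicator (fun _ => (1 : ℝ)) | F (n - 1)] =ᵐ[P] fun _ => 1 / 2) ∧
      (P[({ω | ξ n ω = -1}).indicator (fun _ => (1 : ℝ)) | F (n - 1)] =ᵐ[P] fun _ => 1 / 2) ∧
      (P[({ω | η n ω = 1}).indicator (fun _ => (1 : ℝ)) | F (n - 1)] =ᵐ[P] fun _ => 1 / 2) ∧
      (P[({ω | η n ω = -1}).indicator (fun _ => (1 : ℝ)) | F (n - 1)] =ᵐ[P] fun _ => 1 / 2))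
    (ζ ψ : ℕ → Ω → ℝ)
    (hζm : ∀ n, Measurable (ζ n)) (hψm : ∀ n, Measurable (ψ n))
    (hζd : ∀ n, P {ω | ζ n ω = 1} = 2⁻¹ ∧ P {ω | ζ n ω = -1} = 2⁻¹)
    (hindep : iIndep (fun i : ℕ ⊕ ℕ ⊕ Unit =>
      Sum.elim (fun n => MeasurableSpace.comap (ζ n) inferInstance)
        (Sum.elim (fun n => MeasurableSpace.comap (ψ n) inferInstance)
          (fun _ => ⨆ n, (F n : MeasurableSpace Ω))) i) P)
    (k l : ℕ) (hk : 1 ≤ k) (hl : 1 ≤ l) (hK : k - 1 < k) (hL : l - 1 < l)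
    (nn : Fin k → ℕ) (mm : Fin l → ℕ)
    (hn1 : ∀ i, 1 ≤ nn i) (hm1 : ∀ j, 1 ≤ mm j)
    (hnmono : StrictMono nn) (hmmono : StrictMono mm)
    (x : Fin k → ℝ) (y : Fin l → ℝ)
    (hx : ∀ i, x i = 1 ∨ x i = -1) (hy : ∀ j, y j = 1 ∨ y j = -1) :
    P ({ω | ∀ i, xiAlpha ξ η ζ (nn i) ω = x i} ∩ {ω | ∀ j, xiBeta ξ η ψ (mm j) ω = y j} ∩ {ω | betaProc ξ η (mm ⟨l - 1, hL⟩) ω < alphaProc ξ η (nn ⟨k - 1, hK⟩) ω})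
      = 2⁻¹ * P ({ω | ∀ i : Fin k, (i : ℕ) + 1 < k → xiAlpha ξ η ζ (nn i) ω = x i} ∩ {ω | ∀ j, xiBeta ξ η ψ (mm j) ω = y j} ∩ {ω | betaProc ξ η (mm ⟨l - 1, hL⟩) ω < alphaProc ξ η (nn ⟨k - 1, hK⟩) ω}) := by
  classical
  have hN1 : 1 ≤ nn ⟨k - 1, hK⟩ := hn1 _
  have hM1 : 1 ≤ mm ⟨l - 1, hL⟩ := hm1 _
  -- ambient measurability
  have hmA : MeasurableSet {ω | ∀ i, xiAlpha ξ η ζ (nn i) ω = x i} := by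
    have : {ω | ∀ i, xiAlpha ξ η ζ (nn i) ω = x i} = ⋂ i, {ω | xiAlpha ξ η ζ (nn i) ω = x i} := by
      ext ω; simp only [mem_iInter, mem_setOf_eq]
    rw [this]
    exact MeasurableSet.iInter fun i =>
      measXiAlphaEqM F ξ η hξm hηm mΩ F.le ζ ((hζm (nn i)).comap_le) (hn1 i) (x i)
  have hmA2 : MeasurableSet {ω | ∀ i : Fin k, (i : ℕ) + 1 < k → xiAlpha ξ η ζ (nn i) ω = x i} := by
    have : {ω | ∀ i : Fin k, (i : ℕ) + 1 < k → xiAlpha ξ η ζ (nn i) ω = x i} = ⋂ i : Fin k, ⋂ (_ : (i : ℕ) + 1 < k), {ω | xiAlpha ξ η ζ (nn i) ω = x i} := by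
      ext ω; simp only [mem_iInter, mem_setOf_eq]
    rw [this]
    exact MeasurableSet.iInter fun (i : Fin k) => MeasurableSet.iInter fun _ =>
      measXiAlphaEqM F ξ η hξm hηm mΩ F.le ζ ((hζm (nn i)).comap_le) (hn1 i) (x i)
  have hmB : MeasurableSet {ω | ∀ j, xiBeta ξ η ψ (mm j) ω = y j} := by
    have : {ω | ∀ j, xiBeta ξ η ψ (mm j) ω = y j} = ⋂ j, {ω | xiBeta ξ η ψ (mm j) ω = y j} := by
      ext ω; simp only [mem_iInter, mem_setOf_eq]
    rw [this]
    exact MeasurableSet.iInter fun j =>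
      measXiBetaEqM F ξ η hξm hηm mΩ F.le ψ ((hψm (mm j)).comap_le) (hm1 j) (y j)
  have hmC : ∀ j : ℕ, MeasurableSet ((fun j : ℕ => {ω | alphaProc ξ η (nn ⟨k - 1, hK⟩) ω = (j : ℕ∞) ∧ betaProc ξ η (mm ⟨l - 1, hL⟩) ω < (j : ℕ∞)}) j) := by
    intro j
    have : (fun j : ℕ => {ω | alphaProc ξ η (nn ⟨k - 1, hK⟩) ω = (j : ℕ∞) ∧ betaProc ξ η (mm ⟨l - 1, hL⟩) ω < (j : ℕ∞)}) j = {ω | alphaProc ξ η (nn ⟨k - 1, hK⟩) ω = (j : ℕ∞)}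
        ∩ {ω | betaProc ξ η (mm ⟨l - 1, hL⟩) ω < (j : ℕ∞)} := rfl
    rw [this]
    exact (measAlphaEqM F ξ η hξm hηm mΩ F.le hN1 j).inter
      (measBetaLtM F ξ η hξm hηm mΩ F.le hM1 j)
  have hmCinf : MeasurableSet {ω | alphaProc ξ η (nn ⟨k - 1, hK⟩) ω = ⊤ ∧ betaProc ξ η (mm ⟨l - 1, hL⟩) ω ≠ ⊤} := by
    have : {ω | alphaProc ξ η (nn ⟨k - 1, hK⟩) ω = ⊤ ∧ betaProc ξ η (mm ⟨l - 1, hL⟩) ω ≠ ⊤} = {ω | alphaProc ξ η (nn ⟨k - 1, hK⟩) ω = ⊤}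
        ∩ {ω | betaProc ξ η (mm ⟨l - 1, hL⟩) ω = ⊤}ᶜ := rfl
    rw [this]
    exact (measAlphaTopM F ξ η hξm hηm mΩ F.le hN1).inter
      (measBetaTopM F ξ η hξm hηm mΩ F.le hM1).compl
  -- decomposition of the event β < α
  have hsplit : ∀ W : Set Ω, MeasurableSet W →
      P (W ∩ {ω | betaProc ξ η (mm ⟨l - 1, hL⟩) ω < alphaProc ξ η (nn ⟨k - 1, hK⟩) ω}) = (∑' j : ℕ, P (W ∩ (fun j : ℕ => {ω | alphaProc ξ η (nn ⟨k - 1, hK⟩) ω = (j : ℕ∞) ∧ betaProc ξ η (mm ⟨l - 1, hL⟩) ω < (j : ℕ∞)}) j)) + P (W ∩ {ω | alphaProc ξ η (nn ⟨k - 1, hK⟩) ω = ⊤ ∧ betaProc ξ η (mm ⟨l - 1, hL⟩) ω ≠ ⊤}) := by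
    intro W hW
    have hdecomp : W ∩ {ω | betaProc ξ η (mm ⟨l - 1, hL⟩) ω < alphaProc ξ η (nn ⟨k - 1, hK⟩) ω} = (⋃ j : ℕ, W ∩ (fun j : ℕ => {ω | alphaProc ξ η (nn ⟨k - 1, hK⟩) ω = (j : ℕ∞) ∧ betaProc ξ η (mm ⟨l - 1, hL⟩) ω < (j : ℕ∞)}) j) ∪ (W ∩ {ω | alphaProc ξ η (nn ⟨k - 1, hK⟩) ω = ⊤ ∧ betaProc ξ η (mm ⟨l - 1, hL⟩) ω ≠ ⊤}) := by
      ext ω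
      simp only [mem_inter_iff, mem_union, mem_iUnion, mem_setOf_eq]
      constructor
      · rintro ⟨hw, hlt⟩
        cases h : alphaProc ξ η (nn ⟨k - 1, hK⟩) ω with
        | top =>
          right
          rw [h] at hlt
          exact ⟨hw, rfl, hlt.ne_top⟩
        | coe j =>
          left
          rw [h] at hlt
          exact ⟨j, hw, rfl, hlt⟩
      · rintro (⟨j, hw, h1, h2⟩ | ⟨hw, h1, h2⟩)
        · exact ⟨hw, by rw [h1]; exact h2⟩
        · exact ⟨hw, by rw [h1]; exact lt_top_iff_ne_top.2 h2⟩
    have hdisj : Disjoint (⋃ j : ℕ, W ∩ (fun j : ℕ => {ω | alphaProc ξ η (nn ⟨k - 1, hK⟩) ω = (j : ℕ∞) ∧ betaProc ξ η (mm ⟨l - 1, hL⟩) ω < (j : ℕ∞)}) j) (W ∩ {ω | alphaProc ξ η (nn ⟨k - 1, hK⟩) ω = ⊤ ∧ betaProc ξ η (mm ⟨l - 1, hL⟩) ω ≠ ⊤}) := by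
      rw [Set.disjoint_left]
      rintro ω hω hω'
      simp only [mem_iUnion, mem_inter_iff, mem_setOf_eq] at hω hω'
      obtain ⟨j, -, h1, -⟩ := hω
      rw [hω'.2.1] at h1
      exact (ENat.coe_ne_top j) h1.symm
    have hpd : Pairwise (Function.onFun Disjoint fun j : ℕ => W ∩ (fun j : ℕ => {ω | alphaProc ξ η (nn ⟨k - 1, hK⟩) ω = (j : ℕ∞) ∧ betaProc ξ η (mm ⟨l - 1, hL⟩) ω < (j : ℕ∞)}) j) := by
      intro a b hab
      simp only [Function.onFun]
      rw [Set.disjoint_left]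
      rintro ω ⟨-, h1, -⟩ ⟨-, h2, -⟩
      rw [h1] at h2
      exact hab (by exact_mod_cast h2)
    rw [hdecomp, measure_union hdisj (hW.inter hmCinf),
      measure_iUnion hpd (fun j => hW.inter (hmC j))]
  -- the finite-time pieces
  have hstep : ∀ j : ℕ, P ({ω | ∀ i, xiAlpha ξ η ζ (nn i) ω = x i} ∩ {ω | ∀ j, xiBeta ξ η ψ (mm j) ω = y j} ∩ (fun j : ℕ => {ω | alphaProc ξ η (nn ⟨k - 1, hK⟩) ω = (j : ℕ∞) ∧ betaProc ξ η (mm ⟨l - 1, hL⟩) ω < (j : ℕ∞)}) j) = 2⁻¹ * P ({ω | ∀ i : Fin k, (i : ℕ) + 1 < k → xiAlpha ξ η ζ (nn i) ω = x i} ∩ {ω | ∀ j, xiBeta ξ η ψ (mm j) ω = y j} ∩ (fun j : ℕ => {ω | alphaProc ξ η (nn ⟨k - 1, hK⟩) ω = (j : ℕ∞) ∧ betaProc ξ η (mm ⟨l - 1, hL⟩) ω < (j : ℕ∞)}) j) := by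
    intro j
    rcases lt_or_ge j 2 with hj2 | hj2
    · have hempty : (fun j : ℕ => {ω | alphaProc ξ η (nn ⟨k - 1, hK⟩) ω = (j : ℕ∞) ∧ betaProc ξ η (mm ⟨l - 1, hL⟩) ω < (j : ℕ∞)}) j = (∅ : Set Ω) := by
        ext ω
        simp only [mem_setOf_eq, mem_empty_iff_false, iff_false, not_and]
        intro h1 h2
        have hja : 1 ≤ j := alpha_coe_pos ξ η h1
        cases hb : betaProc ξ η (mm ⟨l - 1, hL⟩) ω with
        | top => rw [hb] at h2; exact absurd h2 (by simp)
        | coe r =>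
          rw [hb] at h2
          have hr : r < j := by exact_mod_cast h2
          have := beta_coe_pos ξ η hb
          omega
      rw [hempty, inter_empty, inter_empty]
      simp
    · have hj1 : (1:ℕ) ≤ j := by omega
      set G := {ω | Tproc ξ η (j-1) ω = (nn ⟨k - 1, hK⟩) - 1}
          ∩ ({ω | ∀ i : Fin k, (i:ℕ)+1 < k →
                ∃ r, 1 ≤ r ∧ r < j ∧ alphaProc ξ η (nn i) ω = (r:ℕ∞) ∧ ξ r ω = x i}
          ∩ ({ω | ∀ jj : Fin l,
                ∃ r, 1 ≤ r ∧ r < j ∧ betaProc ξ η (mm jj) ω = (r:ℕ∞) ∧ ξ r ω = y jj}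
          ∩ {ω | betaProc ξ η (mm ⟨l - 1, hL⟩) ω < (j : ℕ∞)})) with hGdef
      have hGF : MeasurableSet[F (j-1)] G := by
        rw [hGdef]
        refine MeasurableSet.inter ?_ (MeasurableSet.inter ?_ (MeasurableSet.inter ?_ ?_))
        · exact (measTfun F ξ η hξm hηm (j-1)) (measurableSet_singleton _)
        · have : {ω : Ω | ∀ i : Fin k, (i:ℕ)+1 < k →
                ∃ r, 1 ≤ r ∧ r < j ∧ alphaProc ξ η (nn i) ω = (r:ℕ∞) ∧ ξ r ω = x i}
              = ⋂ i : Fin k, ⋂ (_ : (i:ℕ)+1 < k), ⋃ r : ℕ, ⋃ (_ : 1 ≤ r ∧ r < j),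
                ({ω | alphaProc ξ η (nn i) ω = (r:ℕ∞)} ∩ {ω | ξ r ω = x i}) := by
            ext ω
            simp only [mem_iInter, mem_iUnion, mem_inter_iff, mem_setOf_eq]
            constructor
            · intro h i hi
              obtain ⟨r, h1, h2, h3, h4⟩ := h i hi
              exact ⟨r, ⟨h1, h2⟩, h3, h4⟩
            · intro h i hi
              obtain ⟨r, ⟨h1, h2⟩, h3, h4⟩ := h i hi
              exact ⟨r, h1, h2, h3, h4⟩
          rw [this]
          refine MeasurableSet.iInter fun i => MeasurableSet.iInter fun hi =>
            MeasurableSet.iUnion fun r => MeasurableSet.iUnion fun hr =>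
            MeasurableSet.inter ?_ ?_
          · exact F.mono (by omega : r ≤ j - 1) _ (measAlphaEqF F ξ η hξm hηm (hn1 i) hr.1)
          · exact F.mono (by omega : r ≤ j - 1) _ ((hξm r hr.1) (measurableSet_singleton (x i)))
        · have : {ω : Ω | ∀ jj : Fin l,
                ∃ r, 1 ≤ r ∧ r < j ∧ betaProc ξ η (mm jj) ω = (r:ℕ∞) ∧ ξ r ω = y jj}
              = ⋂ jj : Fin l, ⋃ r : ℕ, ⋃ (_ : 1 ≤ r ∧ r < j),
                ({ω | betaProc ξ η (mm jj) ω = (r:ℕ∞)} ∩ {ω | ξ r ω = y jj}) := by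
            ext ω
            simp only [mem_iInter, mem_iUnion, mem_inter_iff, mem_setOf_eq]
            constructor
            · intro h jj
              obtain ⟨r, h1, h2, h3, h4⟩ := h jj
              exact ⟨r, ⟨h1, h2⟩, h3, h4⟩
            · intro h jj
              obtain ⟨r, ⟨h1, h2⟩, h3, h4⟩ := h jj
              exact ⟨r, h1, h2, h3, h4⟩
          rw [this]
          refine MeasurableSet.iInter fun jj =>
            MeasurableSet.iUnion fun r => MeasurableSet.iUnion fun hr =>
            MeasurableSet.inter ?_ ?_
          · exact F.mono (by omega : r ≤ j - 1) _ (measBetaEqF F ξ η hξm hηm (hm1 jj) hr.1)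
          · exact F.mono (by omega : r ≤ j - 1) _ ((hξm r hr.1) (measurableSet_singleton (y jj)))
        · exact measBetaLtF F ξ η hξm hηm hM1 hj1
      have hQiff : ∀ ω, Tproc ξ η (j-1) ω = (nn ⟨k - 1, hK⟩) - 1 →
          (alphaProc ξ η (nn ⟨k - 1, hK⟩) ω = (j:ℕ∞) ↔ ξ j ω = η j ω) := by
        intro ω hT2
        have hsucc := Tproc_succ ξ η (j-1) ω
        rw [show j - 1 + 1 = j by omega] at hsucc
        constructor
        · intro hα
          obtain ⟨hT1, -⟩ := (alpha_eq_coe_iff ξ η hN1 hj1 ω).1 hα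
          by_contra hne
          have : Qproc ξ η j ω = 0 := by rw [Qproc, if_neg hne]
          omega
        · intro heq
          have hQ : Qproc ξ η j ω = 1 := by rw [Qproc, if_pos heq]
          exact (alpha_eq_coe_iff ξ η hN1 hj1 ω).2 ⟨by omega, hT2⟩
      have hBiff : ∀ ω, betaProc ξ η (mm ⟨l - 1, hL⟩) ω < (j:ℕ∞) →
          ((∀ jj : Fin l, xiBeta ξ η ψ (mm jj) ω = y jj) ↔
           (∀ jj : Fin l, ∃ r, 1 ≤ r ∧ r < j ∧ betaProc ξ η (mm jj) ω = (r:ℕ∞) ∧ ξ r ω = y jj)) := by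
        intro ω hβ
        have hfin : ∀ jj : Fin l, ∃ r, 1 ≤ r ∧ r < j ∧ betaProc ξ η (mm jj) ω = (r:ℕ∞) := by
          intro jj
          cases hb : betaProc ξ η (mm ⟨l - 1, hL⟩) ω with
          | top => rw [hb] at hβ; exact absurd hβ (by simp)
          | coe r0 =>
            rw [hb] at hβ
            have hr0j : r0 < j := by exact_mod_cast hβ
            have hr01 : 1 ≤ r0 := beta_coe_pos ξ η hb
            obtain ⟨hS1, -⟩ := (beta_eq_coe_iff ξ η hM1 hr01 ω).1 hb
            have hjle : jj ≤ (⟨l - 1, hL⟩ : Fin l) := by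
              rcases eq_or_ne jj ⟨l - 1, hL⟩ with h | h
              · exact le_of_eq h
              · have hlt : (jj : ℕ) < l - 1 := by
                  have h1 := jj.isLt
                  rcases Nat.lt_or_ge (jj : ℕ) (l - 1) with h2 | h2
                  · exact h2
                  · exact absurd (Fin.ext (show (jj : ℕ) = l - 1 by omega)) h
                exact le_of_lt (by rw [Fin.lt_def]; exact hlt)
            have hmle : mm jj ≤ (mm ⟨l - 1, hL⟩) := hmmono.monotone hjle
            obtain ⟨r, hr1, hrle, hSr⟩ := cnt_reach (f := fun s => Sproc ξ η s ω)
              (Sproc_zero ξ η ω) (fun s => Sproc_step ξ η ω s) (hm1 jj)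
              (show mm jj ≤ Sproc ξ η r0 ω by rw [hS1]; exact hmle)
            obtain ⟨j', hj'eq, hj'1, hj'S, hj'min⟩ :=
              hitT_spec (f := fun s => Sproc ξ η s ω) ⟨r, hr1, hSr⟩
            have hβjj : betaProc ξ η (mm jj) ω = (j' : ℕ∞) := by
              rw [betaProc_eq_hitT]; exact hj'eq
            have hj'le : j' ≤ r := by
              by_contra hc
              push_neg at hc
              exact hj'min r hr1 hc hSr
            exact ⟨j', hj'1, by omega, hβjj⟩
        constructor
        · intro h jj
          obtain ⟨r, h1, h2, h3⟩ := hfin jj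
          refine ⟨r, h1, h2, h3, ?_⟩
          rw [← xiBeta_of_coe ξ η (ψ := ψ) h3]
          exact h jj
        · intro h jj
          obtain ⟨r, h1, h2, h3, h4⟩ := h jj
          rw [xiBeta_of_coe ξ η (ψ := ψ) h3]
          exact h4
      have hAiff2 : ∀ ω, Tproc ξ η (j-1) ω = (nn ⟨k - 1, hK⟩) - 1 →
          ((∀ i : Fin k, (i:ℕ)+1 < k → xiAlpha ξ η ζ (nn i) ω = x i) ↔
           (∀ i : Fin k, (i:ℕ)+1 < k →
              ∃ r, 1 ≤ r ∧ r < j ∧ alphaProc ξ η (nn i) ω = (r:ℕ∞) ∧ ξ r ω = x i)) := by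
        intro ω hT2
        have hfin : ∀ i : Fin k, (i:ℕ)+1 < k →
            ∃ r, 1 ≤ r ∧ r < j ∧ alphaProc ξ η (nn i) ω = (r:ℕ∞) := by
          intro i hi
          have hlt : nn i < (nn ⟨k - 1, hK⟩) := hnmono (by
            rw [Fin.lt_def]
            show (i : ℕ) < k - 1
            omega)
          obtain ⟨r, hr1, hrle, hTr⟩ := cnt_reach (f := fun s => Tproc ξ η s ω)
            (Tproc_zero ξ η ω) (fun s => Tproc_step ξ η ω s) (hn1 i)
            (show nn i ≤ Tproc ξ η (j-1) ω by rw [hT2]; omega)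
          obtain ⟨j', hj'eq, hj'1, hj'T, hj'min⟩ :=
            hitT_spec (f := fun s => Tproc ξ η s ω) ⟨r, hr1, hTr⟩
          have hα : alphaProc ξ η (nn i) ω = (j' : ℕ∞) := by
            rw [alphaProc_eq_hitT]; exact hj'eq
          have hj'le : j' ≤ r := by
            by_contra hc
            push_neg at hc
            exact hj'min r hr1 hc hTr
          exact ⟨j', hj'1, by omega, hα⟩
        constructor
        · intro h i hi
          obtain ⟨r, h1, h2, h3⟩ := hfin i hi
          refine ⟨r, h1, h2, h3, ?_⟩
          rw [← xiAlpha_of_coe ξ η (ζ := ζ) h3]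
          exact h i hi
        · intro h i hi
          obtain ⟨r, h1, h2, h3, h4⟩ := h i hi
          rw [xiAlpha_of_coe ξ η (ζ := ζ) h3]
          exact h4
      have hE2 : {ω | ∀ i : Fin k, (i : ℕ) + 1 < k → xiAlpha ξ η ζ (nn i) ω = x i} ∩ {ω | ∀ j, xiBeta ξ η ψ (mm j) ω = y j} ∩ (fun j : ℕ => {ω | alphaProc ξ η (nn ⟨k - 1, hK⟩) ω = (j : ℕ∞) ∧ betaProc ξ η (mm ⟨l - 1, hL⟩) ω < (j : ℕ∞)}) j = G ∩ {ω | ξ j ω = η j ω} := by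
        ext ω
        simp only [hGdef, mem_inter_iff, mem_setOf_eq]
        constructor
        · rintro ⟨⟨hA2ω, hBω⟩, hαj, hβj⟩
          have hT2 : Tproc ξ η (j-1) ω = (nn ⟨k - 1, hK⟩) - 1 :=
            ((alpha_eq_coe_iff ξ η hN1 hj1 ω).1 hαj).2
          exact ⟨⟨hT2, (hAiff2 ω hT2).1 hA2ω, (hBiff ω hβj).1 hBω, hβj⟩, (hQiff ω hT2).1 hαj⟩
        · rintro ⟨⟨hT2, hA'', hB'', hβj⟩, hQω⟩
          have hαj : alphaProc ξ η (nn ⟨k - 1, hK⟩) ω = (j:ℕ∞) := (hQiff ω hT2).2 hQω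
          exact ⟨⟨(hAiff2 ω hT2).2 hA'', (hBiff ω hβj).2 hB''⟩, hαj, hβj⟩
      have hE1 : {ω | ∀ i, xiAlpha ξ η ζ (nn i) ω = x i} ∩ {ω | ∀ j, xiBeta ξ η ψ (mm j) ω = y j} ∩ (fun j : ℕ => {ω | alphaProc ξ η (nn ⟨k - 1, hK⟩) ω = (j : ℕ∞) ∧ betaProc ξ η (mm ⟨l - 1, hL⟩) ω < (j : ℕ∞)}) j
          = G ∩ {ω | ξ j ω = η j ω} ∩ {ω | ξ j ω = x ⟨k - 1, hK⟩} := by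
        ext ω
        simp only [hGdef, mem_inter_iff, mem_setOf_eq]
        constructor
        · rintro ⟨⟨hAω, hBω⟩, hαj, hβj⟩
          have hT2 : Tproc ξ η (j-1) ω = (nn ⟨k - 1, hK⟩) - 1 :=
            ((alpha_eq_coe_iff ξ η hN1 hj1 ω).1 hαj).2
          have hxi : ξ j ω = x ⟨k - 1, hK⟩ := by
            rw [← xiAlpha_of_coe ξ η (ζ := ζ) hαj]
            exact hAω _
          exact ⟨⟨⟨hT2, (hAiff2 ω hT2).1 (fun i _ => hAω i), (hBiff ω hβj).1 hBω, hβj⟩,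
            (hQiff ω hT2).1 hαj⟩, hxi⟩
        · rintro ⟨⟨⟨hT2, hA'', hB'', hβj⟩, hQω⟩, hxi⟩
          have hαj : alphaProc ξ η (nn ⟨k - 1, hK⟩) ω = (j:ℕ∞) := (hQiff ω hT2).2 hQω
          have hA2ω := (hAiff2 ω hT2).2 hA''
          have hAω : ∀ i, xiAlpha ξ η ζ (nn i) ω = x i := by
            intro i
            rcases Nat.lt_or_ge ((i:ℕ)+1) k with hlt | hge
            · exact hA2ω i hlt
            · have hieq : i = ⟨k - 1, hK⟩ := Fin.ext (show (i : ℕ) = k - 1 by have := i.isLt; omega)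
              rw [hieq, xiAlpha_of_coe ξ η (ζ := ζ) hαj]
              exact hxi
          exact ⟨⟨hAω, (hBiff ω hβj).2 hB''⟩, hαj, hβj⟩
      rw [hE1, hE2]
      exact klemma P F ξ η hξm hηm hξv hηv hhalf hj1 hGF (hx _)
  -- the infinite-time piece
  have hinf : P ({ω | ∀ i, xiAlpha ξ η ζ (nn i) ω = x i} ∩ {ω | ∀ j, xiBeta ξ η ψ (mm j) ω = y j} ∩ {ω | alphaProc ξ η (nn ⟨k - 1, hK⟩) ω = ⊤ ∧ betaProc ξ η (mm ⟨l - 1, hL⟩) ω ≠ ⊤}) = 2⁻¹ * P ({ω | ∀ i : Fin k, (i : ℕ) + 1 < k → xiAlpha ξ η ζ (nn i) ω = x i} ∩ {ω | ∀ j, xiBeta ξ η ψ (mm j) ω = y j} ∩ {ω | alphaProc ξ η (nn ⟨k - 1, hK⟩) ω = ⊤ ∧ betaProc ξ η (mm ⟨l - 1, hL⟩) ω ≠ ⊤}) := by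
    set fam := (fun i : ℕ ⊕ ℕ ⊕ Unit =>
      Sum.elim (fun n => MeasurableSpace.comap (ζ n) inferInstance)
        (Sum.elim (fun n => MeasurableSpace.comap (ψ n) inferInstance)
          (fun _ => ⨆ n, (F n : MeasurableSpace Ω))) i) with hfam
    have h_le : ∀ i, fam i ≤ mΩ := by
      rintro (n | n | u)
      · exact (hζm n).comap_le
      · exact (hψm n).comap_le
      · exact iSup_le fun n => F.le n
    have hIndep : Indep (⨆ i ∈ ({Sum.inl (nn ⟨k - 1, hK⟩)} : Set (ℕ ⊕ ℕ ⊕ Unit)), fam i)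
        (⨆ i ∈ ({Sum.inl (nn ⟨k - 1, hK⟩)} : Set (ℕ ⊕ ℕ ⊕ Unit))ᶜ, fam i) P :=
      indep_biSup_compl h_le hindep _
    set m' := ⨆ i ∈ ({Sum.inl (nn ⟨k - 1, hK⟩)} : Set (ℕ ⊕ ℕ ⊕ Unit))ᶜ, fam i with hm'
    have hFlem' : ∀ r, (F r : MeasurableSpace Ω) ≤ m' := by
      intro r
      have h1 : fam (Sum.inr (Sum.inr ())) ≤ m' := by
        rw [hm']
        exact le_biSup fam (by simp)
      have h2 : (F r : MeasurableSpace Ω) ≤ fam (Sum.inr (Sum.inr ())) :=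
        le_iSup (fun n => (F n : MeasurableSpace Ω)) r
      exact h2.trans h1
    have hζlem' : ∀ i : Fin k, (i:ℕ) + 1 < k →
        MeasurableSpace.comap (ζ (nn i)) inferInstance ≤ m' := by
      intro i hi
      have hne : nn i ≠ (nn ⟨k - 1, hK⟩) := ne_of_lt (hnmono (by
        rw [Fin.lt_def]
        show (i : ℕ) < k - 1
        omega))
      have h1 : fam (Sum.inl (nn i)) ≤ m' := by
        rw [hm']
        exact le_biSup fam (by simp [hne])
      exact h1
    have hψlem' : ∀ jj : Fin l, MeasurableSpace.comap (ψ (mm jj)) inferInstance ≤ m' := by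
      intro jj
      have h1 : fam (Sum.inr (Sum.inl (mm jj))) ≤ m' := by
        rw [hm']
        exact le_biSup fam (by simp)
      exact h1
    have hHm' : MeasurableSet[m'] ({ω | ∀ i : Fin k, (i : ℕ) + 1 < k → xiAlpha ξ η ζ (nn i) ω = x i} ∩ {ω | ∀ j, xiBeta ξ η ψ (mm j) ω = y j} ∩ {ω | alphaProc ξ η (nn ⟨k - 1, hK⟩) ω = ⊤ ∧ betaProc ξ η (mm ⟨l - 1, hL⟩) ω ≠ ⊤}) := by
      refine MeasurableSet.inter (MeasurableSet.inter ?_ ?_) ?_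
      · have : {ω | ∀ i : Fin k, (i : ℕ) + 1 < k → xiAlpha ξ η ζ (nn i) ω = x i} = ⋂ i : Fin k, ⋂ (_ : (i : ℕ) + 1 < k),
            {ω | xiAlpha ξ η ζ (nn i) ω = x i} := by
          ext ω; simp only [mem_iInter, mem_setOf_eq]
        rw [this]
        exact MeasurableSet.iInter fun (i : Fin k) => MeasurableSet.iInter fun hi =>
          measXiAlphaEqM F ξ η hξm hηm m' hFlem' ζ (hζlem' i hi) (hn1 i) (x i)
      · have : {ω | ∀ j, xiBeta ξ η ψ (mm j) ω = y j} = ⋂ jj : Fin l, {ω | xiBeta ξ η ψ (mm jj) ω = y jj} := by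
          ext ω; simp only [mem_iInter, mem_setOf_eq]
        rw [this]
        exact MeasurableSet.iInter fun jj =>
          measXiBetaEqM F ξ η hξm hηm m' hFlem' ψ (hψlem' jj) (hm1 jj) (y jj)
      · have : {ω | alphaProc ξ η (nn ⟨k - 1, hK⟩) ω = ⊤ ∧ betaProc ξ η (mm ⟨l - 1, hL⟩) ω ≠ ⊤} = {ω | alphaProc ξ η (nn ⟨k - 1, hK⟩) ω = ⊤}
            ∩ {ω | betaProc ξ η (mm ⟨l - 1, hL⟩) ω = ⊤}ᶜ := rfl
        rw [this]
        exact (measAlphaTopM F ξ η hξm hηm m' hFlem' hN1).inter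
          (measBetaTopM F ξ η hξm hηm m' hFlem' hM1).compl
    have hζmeas : MeasurableSet[⨆ i ∈ ({Sum.inl (nn ⟨k - 1, hK⟩)} : Set (ℕ ⊕ ℕ ⊕ Unit)), fam i]
        {ω | ζ (nn ⟨k - 1, hK⟩) ω = x ⟨k - 1, hK⟩} := by
      have h1 : fam (Sum.inl (nn ⟨k - 1, hK⟩)) ≤ ⨆ i ∈ ({Sum.inl (nn ⟨k - 1, hK⟩)} : Set (ℕ ⊕ ℕ ⊕ Unit)), fam i :=
        le_biSup fam (mem_singleton _)
      exact h1 _ ⟨{x ⟨k - 1, hK⟩}, measurableSet_singleton _, rfl⟩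
    have hE3 : {ω | ∀ i, xiAlpha ξ η ζ (nn i) ω = x i} ∩ {ω | ∀ j, xiBeta ξ η ψ (mm j) ω = y j} ∩ {ω | alphaProc ξ η (nn ⟨k - 1, hK⟩) ω = ⊤ ∧ betaProc ξ η (mm ⟨l - 1, hL⟩) ω ≠ ⊤}
        = {ω | ζ (nn ⟨k - 1, hK⟩) ω = x ⟨k - 1, hK⟩} ∩ ({ω | ∀ i : Fin k, (i : ℕ) + 1 < k → xiAlpha ξ η ζ (nn i) ω = x i} ∩ {ω | ∀ j, xiBeta ξ η ψ (mm j) ω = y j} ∩ {ω | alphaProc ξ η (nn ⟨k - 1, hK⟩) ω = ⊤ ∧ betaProc ξ η (mm ⟨l - 1, hL⟩) ω ≠ ⊤}) := by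
      ext ω
      simp only [mem_inter_iff, mem_setOf_eq]
      constructor
      · rintro ⟨⟨hAω, hBω⟩, htop, hβ⟩
        have hζx : ζ (nn ⟨k - 1, hK⟩) ω = x ⟨k - 1, hK⟩ := by
          rw [← xiAlpha_of_top ξ η (ζ := ζ) htop]
          exact hAω _
        exact ⟨hζx, ⟨fun i _ => hAω i, hBω⟩, htop, hβ⟩
      · rintro ⟨hζx, ⟨hA2ω, hBω⟩, htop, hβ⟩
        refine ⟨⟨?_, hBω⟩, htop, hβ⟩
        intro i
        rcases Nat.lt_or_ge ((i:ℕ)+1) k with hlt | hge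
        · exact hA2ω i hlt
        · have hieq : i = ⟨k - 1, hK⟩ := Fin.ext (show (i : ℕ) = k - 1 by have := i.isLt; omega)
          rw [hieq, xiAlpha_of_top ξ η (ζ := ζ) htop]
          exact hζx
    rw [hE3]
    have hIS : IndepSet {ω | ζ (nn ⟨k - 1, hK⟩) ω = x ⟨k - 1, hK⟩} ({ω | ∀ i : Fin k, (i : ℕ) + 1 < k → xiAlpha ξ η ζ (nn i) ω = x i} ∩ {ω | ∀ j, xiBeta ξ η ψ (mm j) ω = y j} ∩ {ω | alphaProc ξ η (nn ⟨k - 1, hK⟩) ω = ⊤ ∧ betaProc ξ η (mm ⟨l - 1, hL⟩) ω ≠ ⊤}) P :=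
      hIndep.indepSet_of_measurableSet hζmeas hHm'
    rw [hIS.measure_inter_eq_mul]
    congr 1
    rcases hx ⟨k - 1, hK⟩ with h | h <;> rw [h]
    · exact (hζd (nn ⟨k - 1, hK⟩)).1
    · exact (hζd (nn ⟨k - 1, hK⟩)).2
  -- combine
  rw [show {ω | ∀ i, xiAlpha ξ η ζ (nn i) ω = x i} ∩ {ω | ∀ j, xiBeta ξ η ψ (mm j) ω = y j} ∩ {ω | betaProc ξ η (mm ⟨l - 1, hL⟩) ω < alphaProc ξ η (nn ⟨k - 1, hK⟩) ω} = ({ω | ∀ i, xiAlpha ξ η ζ (nn i) ω = x i} ∩ {ω | ∀ j, xiBeta ξ η ψ (mm j) ω = y j}) ∩ {ω | betaProc ξ η (mm ⟨l - 1, hL⟩) ω < alphaProc ξ η (nn ⟨k - 1, hK⟩) ω} from rfl,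
    show {ω | ∀ i : Fin k, (i : ℕ) + 1 < k → xiAlpha ξ η ζ (nn i) ω = x i} ∩ {ω | ∀ j, xiBeta ξ η ψ (mm j) ω = y j} ∩ {ω | betaProc ξ η (mm ⟨l - 1, hL⟩) ω < alphaProc ξ η (nn ⟨k - 1, hK⟩) ω} = ({ω | ∀ i : Fin k, (i : ℕ) + 1 < k → xiAlpha ξ η ζ (nn i) ω = x i} ∩ {ω | ∀ j, xiBeta ξ η ψ (mm j) ω = y j}) ∩ {ω | betaProc ξ η (mm ⟨l - 1, hL⟩) ω < alphaProc ξ η (nn ⟨k - 1, hK⟩) ω} from rfl,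
    hsplit _ (hmA.inter hmB), hsplit _ (hmA2.inter hmB)]
  have h1 : (∑' j : ℕ, P (({ω | ∀ i, xiAlpha ξ η ζ (nn i) ω = x i} ∩ {ω | ∀ j, xiBeta ξ η ψ (mm j) ω = y j}) ∩ (fun j : ℕ => {ω | alphaProc ξ η (nn ⟨k - 1, hK⟩) ω = (j : ℕ∞) ∧ betaProc ξ η (mm ⟨l - 1, hL⟩) ω < (j : ℕ∞)}) j))
      = 2⁻¹ * ∑' j : ℕ, P (({ω | ∀ i : Fin k, (i : ℕ) + 1 < k → xiAlpha ξ η ζ (nn i) ω = x i} ∩ {ω | ∀ j, xiBeta ξ η ψ (mm j) ω = y j}) ∩ (fun j : ℕ => {ω | alphaProc ξ η (nn ⟨k - 1, hK⟩) ω = (j : ℕ∞) ∧ betaProc ξ η (mm ⟨l - 1, hL⟩) ω < (j : ℕ∞)}) j) := by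
    rw [← ENNReal.tsum_mul_left]
    exact tsum_congr hstep
  rw [h1, hinf, mul_add]

theorem stmt_6
    {Ω : Type*} [mΩ : MeasurableSpace Ω] (P : Measure Ω) [IsProbabilityMeasure P]
    (F : MeasureTheory.Filtration ℕ mΩ) (hF0 : F 0 = ⊥)
    (ξ η : ℕ → Ω → ℝ)
    (hξm : ∀ n, 1 ≤ n → Measurable[F n] (ξ n))
    (hηm : ∀ n, 1 ≤ n → Measurable[F n] (η n))
    (hξv : ∀ n ω, ξ n ω = 1 ∨ ξ n ω = -1)
    (hηv : ∀ n ω, η n ω = 1 ∨ η n ω = -1)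
    (hhalf : ∀ n, 1 ≤ n →
      (P[({ω | ξ n ω = 1}).indicator (fun _ => (1 : ℝ)) | F (n - 1)] =ᵐ[P] fun _ => 1 / 2) ∧
      (P[({ω | ξ n ω = -1}).indicator (fun _ => (1 : ℝ)) | F (n - 1)] =ᵐ[P] fun _ => 1 / 2) ∧
      (P[({ω | η n ω = 1}).indicator (fun _ => (1 : ℝ)) | F (n - 1)] =ᵐ[P] fun _ => 1 / 2) ∧
      (P[({ω | η n ω = -1}).indicator (fun _ => (1 : ℝ)) | F (n - 1)] =ᵐ[P] fun _ => 1 / 2))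
    (ζ ψ : ℕ → Ω → ℝ)
    (hζm : ∀ n, Measurable (ζ n)) (hψm : ∀ n, Measurable (ψ n))
    (hζd : ∀ n, P {ω | ζ n ω = 1} = 2⁻¹ ∧ P {ω | ζ n ω = -1} = 2⁻¹)
    (hψd : ∀ n, P {ω | ψ n ω = 1} = 2⁻¹ ∧ P {ω | ψ n ω = -1} = 2⁻¹)
    (hindep : iIndep (fun i : ℕ ⊕ ℕ ⊕ Unit =>
      Sum.elim (fun n => MeasurableSpace.comap (ζ n) inferInstance)
        (Sum.elim (fun n => MeasurableSpace.comap (ψ n) inferInstance)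
          (fun _ => ⨆ n, (F n : MeasurableSpace Ω))) i) P)
    (k l : ℕ) (hk : 1 ≤ k) (hl : 1 ≤ l)
    (nn : Fin k → ℕ) (mm : Fin l → ℕ)
    (hn1 : ∀ i, 1 ≤ nn i) (hm1 : ∀ j, 1 ≤ mm j)
    (hnmono : StrictMono nn) (hmmono : StrictMono mm)
    (x : Fin k → ℝ) (y : Fin l → ℝ)
    (hx : ∀ i, x i = 1 ∨ x i = -1) (hy : ∀ j, y j = 1 ∨ y j = -1) :
    P ({ω | ∀ i, xiAlpha ξ η ζ (nn i) ω = x i} ∩ {ω | ∀ j, xiBeta ξ η ψ (mm j) ω = y j})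
      = 2⁻¹ * P ({ω | ∀ i : Fin k, (i : ℕ) + 1 < k → xiAlpha ξ η ζ (nn i) ω = x i}
            ∩ {ω | ∀ j, xiBeta ξ η ψ (mm j) ω = y j}
            ∩ {ω | betaProc ξ η (mm ⟨l - 1, by omega⟩) ω
                < alphaProc ξ η (nn ⟨k - 1, by omega⟩) ω})
        + 2⁻¹ * P ({ω | ∀ i, xiAlpha ξ η ζ (nn i) ω = x i}
            ∩ {ω | ∀ j : Fin l, (j : ℕ) + 1 < l → xiBeta ξ η ψ (mm j) ω = y j}
            ∩ {ω | alphaProc ξ η (nn ⟨k - 1, by omega⟩) ω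
                < betaProc ξ η (mm ⟨l - 1, by omega⟩) ω}) := by
  classical
  have hK : k - 1 < k := by omega
  have hL : l - 1 < l := by omega
  have hN1 : 1 ≤ nn ⟨k - 1, hK⟩ := hn1 _
  have hM1 : 1 ≤ mm ⟨l - 1, hL⟩ := hm1 _
  -- swapped data
  have hη'm : ∀ n, 1 ≤ n → Measurable[F n] (fun ω => -η n ω) := fun n hn => (hηm n hn).neg
  have hη'v : ∀ n ω, -η n ω = 1 ∨ -η n ω = -1 := by
    intro n ω
    rcases hηv n ω with h | h
    · right; rw [h]
    · left; rw [h]; ring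
  have hhalf' : ∀ n, 1 ≤ n →
      (P[({ω | ξ n ω = 1}).indicator (fun _ => (1 : ℝ)) | F (n - 1)] =ᵐ[P] fun _ => 1 / 2) ∧
      (P[({ω | ξ n ω = -1}).indicator (fun _ => (1 : ℝ)) | F (n - 1)] =ᵐ[P] fun _ => 1 / 2) ∧
      (P[({ω | -η n ω = 1}).indicator (fun _ => (1 : ℝ)) | F (n - 1)] =ᵐ[P] fun _ => 1 / 2) ∧
      (P[({ω | -η n ω = -1}).indicator (fun _ => (1 : ℝ)) | F (n - 1)] =ᵐ[P] fun _ => 1 / 2) := by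
    intro n hn
    have e1 : {ω | -η n ω = 1} = {ω | η n ω = -1} := by
      ext ω; constructor <;> intro h <;> simp only [mem_setOf_eq] at * <;> linarith
    have e2 : {ω | -η n ω = -1} = {ω | η n ω = 1} := by
      ext ω; constructor <;> intro h <;> simp only [mem_setOf_eq] at * <;> linarith
    exact ⟨(hhalf n hn).1, (hhalf n hn).2.1, by rw [e1]; exact (hhalf n hn).2.2.2,
      by rw [e2]; exact (hhalf n hn).2.2.1⟩
  have hindep' : iIndep (fun i : ℕ ⊕ ℕ ⊕ Unit =>
      Sum.elim (fun n => MeasurableSpace.comap (ψ n) inferInstance)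
        (Sum.elim (fun n => MeasurableSpace.comap (ζ n) inferInstance)
          (fun _ => ⨆ n, (F n : MeasurableSpace Ω))) i) P := by
    let e : (ℕ ⊕ ℕ ⊕ Unit) ≃ (ℕ ⊕ ℕ ⊕ Unit) :=
      ⟨Sum.elim (fun n => Sum.inr (Sum.inl n))
          (Sum.elim (fun n => Sum.inl n) (fun u => Sum.inr (Sum.inr u))),
        Sum.elim (fun n => Sum.inr (Sum.inl n))
          (Sum.elim (fun n => Sum.inl n) (fun u => Sum.inr (Sum.inr u))),
        by rintro (n | n | u) <;> rfl, by rintro (n | n | u) <;> rfl⟩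
    have h := iIndep_reindex e hindep
    have heq : (fun i : ℕ ⊕ ℕ ⊕ Unit =>
        (fun i : ℕ ⊕ ℕ ⊕ Unit =>
          Sum.elim (fun n => MeasurableSpace.comap (ζ n) inferInstance)
            (Sum.elim (fun n => MeasurableSpace.comap (ψ n) inferInstance)
              (fun _ => ⨆ n, (F n : MeasurableSpace Ω))) i) (e i))
        = (fun i : ℕ ⊕ ℕ ⊕ Unit =>
          Sum.elim (fun n => MeasurableSpace.comap (ψ n) inferInstance)
            (Sum.elim (fun n => MeasurableSpace.comap (ζ n) inferInstance)
              (fun _ => ⨆ n, (F n : MeasurableSpace Ω))) i) := by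
      funext i
      rcases i with n | n | u <;> rfl
    rw [heq] at h
    exact h
  -- the two half-identities
  have h1 := oneSide P F ξ η hξm hηm hξv hηv hhalf ζ ψ hζm hψm hζd hindep
    k l hk hl hK hL nn mm hn1 hm1 hnmono hmmono x y hx hy
  have h2 := oneSide P F ξ (fun n ω => -η n ω) hξm hη'm hξv hη'v hhalf' ψ ζ hψm hζm hψd hindep'
    l k hl hk hL hK mm nn hm1 hn1 hmmono hnmono y x hy hx
  simp only [xiAlpha_swap ξ η hξv hηv ψ, xiBeta_swap ξ η hξv hηv ζ,
    alpha_swap ξ η hξv hηv, beta_swap ξ η hξv hηv] at h2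
  rw [Set.inter_comm ({ω | ∀ j, xiBeta ξ η ψ (mm j) ω = y j}) ({ω | ∀ i, xiAlpha ξ η ζ (nn i) ω = x i}),
    Set.inter_comm ({ω | ∀ j : Fin l, (j : ℕ) + 1 < l → xiBeta ξ η ψ (mm j) ω = y j}) ({ω | ∀ i, xiAlpha ξ η ζ (nn i) ω = x i})] at h2
  -- ambient measurability
  have hmA : MeasurableSet {ω | ∀ i, xiAlpha ξ η ζ (nn i) ω = x i} := by
    have : {ω | ∀ i, xiAlpha ξ η ζ (nn i) ω = x i} = ⋂ i, {ω | xiAlpha ξ η ζ (nn i) ω = x i} := by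
      ext ω; simp only [mem_iInter, mem_setOf_eq]
    rw [this]
    exact MeasurableSet.iInter fun i =>
      measXiAlphaEqM F ξ η hξm hηm mΩ F.le ζ ((hζm (nn i)).comap_le) (hn1 i) (x i)
  have hmB : MeasurableSet {ω | ∀ j, xiBeta ξ η ψ (mm j) ω = y j} := by
    have : {ω | ∀ j, xiBeta ξ η ψ (mm j) ω = y j} = ⋂ j, {ω | xiBeta ξ η ψ (mm j) ω = y j} := by
      ext ω; simp only [mem_iInter, mem_setOf_eq]
    rw [this]
    exact MeasurableSet.iInter fun j =>
      measXiBetaEqM F ξ η hξm hηm mΩ F.le ψ ((hψm (mm j)).comap_le) (hm1 j) (y j)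
  have hmLT1 : MeasurableSet {ω | betaProc ξ η (mm ⟨l - 1, hL⟩) ω < alphaProc ξ η (nn ⟨k - 1, hK⟩) ω} := by
    have hdec : {ω | betaProc ξ η (mm ⟨l - 1, hL⟩) ω < alphaProc ξ η (nn ⟨k - 1, hK⟩) ω} = (⋃ j : ℕ, {ω | alphaProc ξ η (nn ⟨k - 1, hK⟩) ω = (j : ℕ∞)}
          ∩ {ω | betaProc ξ η (mm ⟨l - 1, hL⟩) ω < (j : ℕ∞)})
        ∪ ({ω | alphaProc ξ η (nn ⟨k - 1, hK⟩) ω = ⊤} ∩ {ω | betaProc ξ η (mm ⟨l - 1, hL⟩) ω = ⊤}ᶜ) := by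
      ext ω
      simp only [mem_union, mem_iUnion, mem_inter_iff, mem_setOf_eq, mem_compl_iff]
      constructor
      · intro hlt
        cases h : alphaProc ξ η (nn ⟨k - 1, hK⟩) ω with
        | top =>
          right
          rw [h] at hlt
          exact ⟨rfl, hlt.ne_top⟩
        | coe j =>
          left
          rw [h] at hlt
          exact ⟨j, rfl, hlt⟩
      · rintro (⟨j, h1, h2⟩ | ⟨h1, h2⟩)
        · rw [h1]; exact h2
        · rw [h1]; exact lt_top_iff_ne_top.2 h2
    rw [hdec]
    refine MeasurableSet.union (MeasurableSet.iUnion fun j => ?_) ?_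
    · exact (measAlphaEqM F ξ η hξm hηm mΩ F.le hN1 j).inter
        (measBetaLtM F ξ η hξm hηm mΩ F.le hM1 j)
    · exact (measAlphaTopM F ξ η hξm hηm mΩ F.le hN1).inter
        (measBetaTopM F ξ η hξm hηm mΩ F.le hM1).compl
  -- partition of A ∩ B
  have hne : ∀ ω : Ω, alphaProc ξ η (nn ⟨k - 1, hK⟩) ω ≠ betaProc ξ η (mm ⟨l - 1, hL⟩) ω :=
    fun ω => alpha_ne_beta ξ η hN1 hM1 ω
  have hdecomp : {ω | ∀ i, xiAlpha ξ η ζ (nn i) ω = x i} ∩ {ω | ∀ j, xiBeta ξ η ψ (mm j) ω = y j} = ({ω | ∀ i, xiAlpha ξ η ζ (nn i) ω = x i} ∩ {ω | ∀ j, xiBeta ξ η ψ (mm j) ω = y j} ∩ {ω | alphaProc ξ η (nn ⟨k - 1, hK⟩) ω < betaProc ξ η (mm ⟨l - 1, hL⟩) ω}) ∪ ({ω | ∀ i, xiAlpha ξ η ζ (nn i) ω = x i} ∩ {ω | ∀ j, xiBeta ξ η ψ (mm j) ω = y j} ∩ {ω | betaProc ξ η (mm ⟨l - 1, hL⟩)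 ω < alphaProc ξ η (nn ⟨k - 1, hK⟩) ω}) := by
    ext ω
    simp only [mem_union, mem_inter_iff, mem_setOf_eq]
    constructor
    · rintro ⟨ha, hb⟩
      rcases lt_or_gt_of_ne (hne ω) with h | h
      · exact Or.inl ⟨⟨ha, hb⟩, h⟩
      · exact Or.inr ⟨⟨ha, hb⟩, h⟩
    · rintro (⟨⟨ha, hb⟩, -⟩ | ⟨⟨ha, hb⟩, -⟩) <;> exact ⟨ha, hb⟩
  have hdisj : Disjoint ({ω | ∀ i, xiAlpha ξ η ζ (nn i) ω = x i} ∩ {ω | ∀ j, xiBeta ξ η ψ (mm j) ω = y j} ∩ {ω | alphaProc ξ η (nn ⟨k - 1, hK⟩) ω < betaProc ξ η (mm ⟨l - 1, hL⟩) ω}) ({ω | ∀ i, xiAlpha ξ η ζ (nn i) ω = x i} ∩ {ω | ∀ j, xiBeta ξ η ψ (mm j) ω = y j} ∩ {ω | betaProc ξ η (mm ⟨l - 1, hL⟩) ω < alphaProc ξ η (nn ⟨k - 1, hK⟩) ω}) := by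
    rw [Set.disjoint_left]
    rintro ω ⟨-, h1⟩ ⟨-, h2⟩
    simp only [mem_setOf_eq] at h1 h2
    exact absurd h2 (lt_asymm h1)
  calc P ({ω | ∀ i, xiAlpha ξ η ζ (nn i) ω = x i} ∩ {ω | ∀ j, xiBeta ξ η ψ (mm j) ω = y j})
      = P ({ω | ∀ i, xiAlpha ξ η ζ (nn i) ω = x i} ∩ {ω | ∀ j, xiBeta ξ η ψ (mm j) ω = y j} ∩ {ω | alphaProc ξ η (nn ⟨k - 1, hK⟩) ω < betaProc ξ η (mm ⟨l - 1, hL⟩) ω}) + P ({ω | ∀ i, xiAlpha ξ η ζ (nn i) ω = x i} ∩ {ω | ∀ j, xiBeta ξ η ψ (mm j) ω = y j} ∩ {ω | betaProc ξ η (mm ⟨l - 1, hL⟩) ω < alphaProc ξ η (nn ⟨k - 1, hK⟩) ω}) := by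
        conv_lhs => rw [hdecomp]
        exact measure_union hdisj ((hmA.inter hmB).inter hmLT1)
    _ = P ({ω | ∀ i, xiAlpha ξ η ζ (nn i) ω = x i} ∩ {ω | ∀ j, xiBeta ξ η ψ (mm j) ω = y j} ∩ {ω | betaProc ξ η (mm ⟨l - 1, hL⟩) ω < alphaProc ξ η (nn ⟨k - 1, hK⟩) ω}) + P ({ω | ∀ i, xiAlpha ξ η ζ (nn i) ω = x i} ∩ {ω | ∀ j, xiBeta ξ η ψ (mm j) ω = y j} ∩ {ω | alphaProc ξ η (nn ⟨k - 1, hK⟩) ω < betaProc ξ η (mm ⟨l - 1, hL⟩) ω}) := add_comm _ _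
    _ = 2⁻¹ * P ({ω | ∀ i : Fin k, (i : ℕ) + 1 < k → xiAlpha ξ η ζ (nn i) ω = x i} ∩ {ω | ∀ j, xiBeta ξ η ψ (mm j) ω = y j} ∩ {ω | betaProc ξ η (mm ⟨l - 1, hL⟩) ω < alphaProc ξ η (nn ⟨k - 1, hK⟩) ω}) + 2⁻¹ * P ({ω | ∀ i, xiAlpha ξ η ζ (nn i) ω = x i} ∩ {ω | ∀ j : Fin l, (j : ℕ) + 1 < l → xiBeta ξ η ψ (mm j) ω = y j} ∩ {ω | alphaProc ξ η (nn ⟨k - 1, hK⟩) ω < betaProc ξ η (mm ⟨l - 1, hL⟩) ω}) := by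
        rw [h1, h2]
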